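/- arXiv:1912.02882 — 7 statements merged into one kernel-verified Lean document; each statement's English description precedes it below -/
import Mathlib

section
/- For any n×n complex matrix X and each j = 1,…,n, the j-th largest eigenvalue of the Hermitian part Re(X) = (X + X*)/2 satisfies λ_j(Re(X)) ≤ σ_j(X), the j-th largest singular value of X. -/
open Matrix
open scoped ComplexOrder

noncomputable def eigDesc {n : ℕ} {A : Matrix (Fin n) (Fin n) ℂ} (hA : A.IsHermitian)
    (j : Fin n) : ℝ :=
  (hA.eigenvalues ∘ Tuple.sort hA.eigenvalues) j.rev

noncomputable def singVal {n : ℕ} (A : Matrix (Fin n) (Fin n) ℂ) (j : Fin n) : ℝ :=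
  Real.sqrt (eigDesc ((Matrix.posSemidef_conjTranspose_mul_self A).isHermitian) j)

noncomputable def hermPart {n : ℕ} (X : Matrix (Fin n) (Fin n) ℂ) :
    Matrix (Fin n) (Fin n) ℂ :=
  (1/2 : ℂ) • (X + Xᴴ)

lemma hermPart_isHermitian {n : ℕ} (X : Matrix (Fin n) (Fin n) ℂ) :
    (hermPart X).IsHermitian := by
  unfold hermPart
  simp [Matrix.IsHermitian, Matrix.conjTranspose_smul, Matrix.conjTranspose_add, add_comm]

/-! ### Auxiliary definitions and lemmas -/

/-- `mulVec` as an operation on `EuclideanSpace`. -/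
noncomputable def mv {n : ℕ} (A : Matrix (Fin n) (Fin n) ℂ) (x : EuclideanSpace ℂ (Fin n)) :
    EuclideanSpace ℂ (Fin n) :=
  (WithLp.equiv 2 _).symm (A *ᵥ (WithLp.equiv 2 _ x))

lemma inner_mv_left {n : ℕ} (A : Matrix (Fin n) (Fin n) ℂ) (x y : EuclideanSpace ℂ (Fin n)) :
    (inner ℂ (mv Aᴴ x) y : ℂ) = inner ℂ x (mv A y) := by
  simp only [mv, EuclideanSpace.inner_eq_star_dotProduct, Equiv.apply_symm_apply]
  change y.ofLp ⬝ᵥ star (Aᴴ *ᵥ x.ofLp) = (A *ᵥ y.ofLp) ⬝ᵥ star x.ofLp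
  rw [star_mulVec, conjTranspose_conjTranspose, dotProduct_comm, ← dotProduct_mulVec, dotProduct_comm]

lemma inner_mv_right {n : ℕ} (A : Matrix (Fin n) (Fin n) ℂ) (x y : EuclideanSpace ℂ (Fin n)) :
    (inner ℂ (mv A x) y : ℂ) = inner ℂ x (mv Aᴴ y) := by
  conv_lhs => rw [← conjTranspose_conjTranspose A]
  exact inner_mv_left Aᴴ x y

lemma mv_mv {n : ℕ} (A B : Matrix (Fin n) (Fin n) ℂ) (x : EuclideanSpace ℂ (Fin n)) :
    mv A (mv B x) = mv (A * B) x := by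
  simp [mv, mulVec_mulVec]

lemma mv_eigenvectorBasis {n : ℕ} {A : Matrix (Fin n) (Fin n) ℂ} (hA : A.IsHermitian)
    (i : Fin n) :
    mv A (hA.eigenvectorBasis i) = (hA.eigenvalues i : ℂ) • hA.eigenvectorBasis i := by
  apply (WithLp.equiv 2 _).injective
  ext k
  have h := congrFun (hA.mulVec_eigenvectorBasis i) k
  simpa [mv, Pi.smul_apply, Complex.real_smul] using h

lemma repr_mv {n : ℕ} {A : Matrix (Fin n) (Fin n) ℂ} (hA : A.IsHermitian)
    (x : EuclideanSpace ℂ (Fin n)) (i : Fin n) :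
    hA.eigenvectorBasis.repr (mv A x) i
      = (hA.eigenvalues i : ℂ) * hA.eigenvectorBasis.repr x i := by
  rw [OrthonormalBasis.repr_apply_apply, OrthonormalBasis.repr_apply_apply]
  have h1 : (inner ℂ (hA.eigenvectorBasis i) (mv A x) : ℂ)
      = inner ℂ (mv A (hA.eigenvectorBasis i)) x := by
    rw [inner_mv_right, hA.eq]
  rw [h1, mv_eigenvectorBasis hA i, inner_smul_left]
  simp

lemma re_inner_mv {n : ℕ} {A : Matrix (Fin n) (Fin n) ℂ} (hA : A.IsHermitian)
    (x : EuclideanSpace ℂ (Fin n)) :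
    (inner ℂ x (mv A x) : ℂ).re
      = ∑ i, hA.eigenvalues i * ‖hA.eigenvectorBasis.repr x i‖ ^ 2 := by
  have h := hA.eigenvectorBasis.repr.inner_map_map x (mv A x)
  rw [← h]
  rw [EuclideanSpace.inner_eq_star_dotProduct]
  simp only [dotProduct, Pi.star_apply, RCLike.star_def]
  rw [Complex.re_sum]
  refine Finset.sum_congr rfl fun i _ => ?_
  rw [repr_mv hA x i]
  set c := hA.eigenvectorBasis.repr x i
  have : (hA.eigenvalues i : ℂ) * c * (starRingEnd ℂ) c
      = (hA.eigenvalues i : ℂ) * ((starRingEnd ℂ) c * c) := by ring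
  rw [this, Complex.conj_mul']
  simp [← Complex.ofReal_pow, ← Complex.ofReal_mul]

lemma norm_sq_eq_sum_repr {n : ℕ} {A : Matrix (Fin n) (Fin n) ℂ} (hA : A.IsHermitian)
    (x : EuclideanSpace ℂ (Fin n)) :
    ‖x‖ ^ 2 = ∑ i, ‖hA.eigenvectorBasis.repr x i‖ ^ 2 := by
  rw [← hA.eigenvectorBasis.repr.norm_map x, EuclideanSpace.norm_eq,
    Real.sq_sqrt (Finset.sum_nonneg fun i _ => sq_nonneg _)]

lemma repr_eq_zero_of_not_mem {n : ℕ} {A : Matrix (Fin n) (Fin n) ℂ} (hA : A.IsHermitian)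
    (s : Finset (Fin n)) (x : EuclideanSpace ℂ (Fin n))
    (hx : x ∈ Submodule.span ℂ (hA.eigenvectorBasis '' ↑s)) {i : Fin n} (hi : i ∉ s) :
    hA.eigenvectorBasis.repr x i = 0 := by
  rw [OrthonormalBasis.repr_apply_apply]
  have : x ∈ LinearMap.ker ((innerSL ℂ (hA.eigenvectorBasis i)).toLinearMap) := by
    refine Submodule.span_le.2 ?_ hx
    rintro y ⟨k, hk, rfl⟩
    have hik : i ≠ k := by rintro rfl; exact hi hk
    simpa [LinearMap.mem_ker] using hA.eigenvectorBasis.orthonormal.2 hik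
  simpa [LinearMap.mem_ker] using this

lemma quad_lower_bound {n : ℕ} {A : Matrix (Fin n) (Fin n) ℂ} (hA : A.IsHermitian)
    (s : Finset (Fin n)) (c : ℝ) (hc : ∀ i ∈ s, c ≤ hA.eigenvalues i)
    (x : EuclideanSpace ℂ (Fin n))
    (hx : x ∈ Submodule.span ℂ (hA.eigenvectorBasis '' ↑s)) :
    c * ‖x‖ ^ 2 ≤ (inner ℂ x (mv A x) : ℂ).re := by
  rw [re_inner_mv hA x, norm_sq_eq_sum_repr hA x, Finset.mul_sum]
  have hzero : ∀ i ∈ (Finset.univ : Finset (Fin n)), i ∉ s →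
      hA.eigenvalues i * ‖hA.eigenvectorBasis.repr x i‖ ^ 2 = 0 := by
    intro i _ hi
    rw [repr_eq_zero_of_not_mem hA s x hx hi]; simp
  have hzero' : ∀ i ∈ (Finset.univ : Finset (Fin n)), i ∉ s →
      c * ‖hA.eigenvectorBasis.repr x i‖ ^ 2 = 0 := by
    intro i _ hi
    rw [repr_eq_zero_of_not_mem hA s x hx hi]; simp
  rw [← Finset.sum_subset s.subset_univ hzero, ← Finset.sum_subset s.subset_univ hzero']
  exact Finset.sum_le_sum fun i hi =>
    mul_le_mul_of_nonneg_right (hc i hi) (sq_nonneg _)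

lemma quad_upper_bound {n : ℕ} {A : Matrix (Fin n) (Fin n) ℂ} (hA : A.IsHermitian)
    (s : Finset (Fin n)) (c : ℝ) (hc : ∀ i ∈ s, hA.eigenvalues i ≤ c)
    (x : EuclideanSpace ℂ (Fin n))
    (hx : x ∈ Submodule.span ℂ (hA.eigenvectorBasis '' ↑s)) :
    (inner ℂ x (mv A x) : ℂ).re ≤ c * ‖x‖ ^ 2 := by
  rw [re_inner_mv hA x, norm_sq_eq_sum_repr hA x, Finset.mul_sum]
  have hzero : ∀ i ∈ (Finset.univ : Finset (Fin n)), i ∉ s →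
      hA.eigenvalues i * ‖hA.eigenvectorBasis.repr x i‖ ^ 2 = 0 := by
    intro i _ hi
    rw [repr_eq_zero_of_not_mem hA s x hx hi]; simp
  have hzero' : ∀ i ∈ (Finset.univ : Finset (Fin n)), i ∉ s →
      c * ‖hA.eigenvectorBasis.repr x i‖ ^ 2 = 0 := by
    intro i _ hi
    rw [repr_eq_zero_of_not_mem hA s x hx hi]; simp
  rw [← Finset.sum_subset s.subset_univ hzero, ← Finset.sum_subset s.subset_univ hzero']
  exact Finset.sum_le_sum fun i hi =>
    mul_le_mul_of_nonneg_right (hc i hi) (sq_nonneg _)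

lemma finrank_span_image {n : ℕ} {A : Matrix (Fin n) (Fin n) ℂ} (hA : A.IsHermitian)
    (s : Finset (Fin n)) :
    Module.finrank ℂ (Submodule.span ℂ (hA.eigenvectorBasis '' ↑s)) = s.card := by
  have hli : LinearIndependent ℂ
      (fun i : (s : Set (Fin n)) => hA.eigenvectorBasis (i : Fin n)) :=
    (hA.eigenvectorBasis.orthonormal.linearIndependent).comp _ Subtype.val_injective
  have hrange : Set.range (fun i : (s : Set (Fin n)) => hA.eigenvectorBasis (i : Fin n))
      = hA.eigenvectorBasis '' ↑s := by
    ext y; simp [Set.range, Set.mem_image]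
  rw [← hrange, finrank_span_eq_card hli]
  simp

/-- The top/bottom index sets for sorted eigenvalues. -/
lemma eigDesc_le_of_mem_top {n : ℕ} {A : Matrix (Fin n) (Fin n) ℂ} (hA : A.IsHermitian)
    (j : Fin n) {i : Fin n}
    (hi : i ∈ Finset.image (Tuple.sort hA.eigenvalues) (Finset.Ici j.rev)) :
    eigDesc hA j ≤ hA.eigenvalues i := by
  obtain ⟨k, hk, rfl⟩ := Finset.mem_image.1 hi
  exact Tuple.monotone_sort hA.eigenvalues (Finset.mem_Ici.1 hk)

lemma le_eigDesc_of_mem_bot {n : ℕ} {A : Matrix (Fin n) (Fin n) ℂ} (hA : A.IsHermitian)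
    (j : Fin n) {i : Fin n}
    (hi : i ∈ Finset.image (Tuple.sort hA.eigenvalues) (Finset.Iic j.rev)) :
    hA.eigenvalues i ≤ eigDesc hA j := by
  obtain ⟨k, hk, rfl⟩ := Finset.mem_image.1 hi
  exact Tuple.monotone_sort hA.eigenvalues (Finset.mem_Iic.1 hk)

theorem stmt4 {n : ℕ} (X : Matrix (Fin n) (Fin n) ℂ) (j : Fin n) :
    eigDesc (hermPart_isHermitian X) j ≤ singVal X j := by
  classical
  set hH := hermPart_isHermitian X
  set hB := (Matrix.posSemidef_conjTranspose_mul_self X).isHermitian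
  set s₁ : Finset (Fin n) := Finset.image (Tuple.sort hH.eigenvalues) (Finset.Ici j.rev)
  set s₂ : Finset (Fin n) := Finset.image (Tuple.sort hB.eigenvalues) (Finset.Iic j.rev)
  set S : Submodule ℂ (EuclideanSpace ℂ (Fin n)) :=
    Submodule.span ℂ (hH.eigenvectorBasis '' ↑s₁)
  set T : Submodule ℂ (EuclideanSpace ℂ (Fin n)) :=
    Submodule.span ℂ (hB.eigenvectorBasis '' ↑s₂)
  have hjrev : (j.rev : ℕ) = n - (j + 1) := by
    simp [Fin.rev]
  have hcard₁ : s₁.card = j + 1 := by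
    rw [Finset.card_image_of_injective _ (Tuple.sort hH.eigenvalues).injective,
      Fin.card_Ici, hjrev]
    omega
  have hcard₂ : s₂.card = n - j := by
    rw [Finset.card_image_of_injective _ (Tuple.sort hB.eigenvalues).injective,
      Fin.card_Iic, hjrev]
    omega
  have hS : Module.finrank ℂ S = j + 1 := by
    rw [finrank_span_image hH s₁, hcard₁]
  have hT : Module.finrank ℂ T = n - j := by
    rw [finrank_span_image hB s₂, hcard₂]
  -- the intersection is nontrivial
  have hsum : Module.finrank ℂ (S ⊔ T : Submodule ℂ (EuclideanSpace ℂ (Fin n)))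
      + Module.finrank ℂ (S ⊓ T : Submodule ℂ (EuclideanSpace ℂ (Fin n)))
      = Module.finrank ℂ S + Module.finrank ℂ T :=
    Submodule.finrank_sup_add_finrank_inf_eq S T
  have hle : Module.finrank ℂ (S ⊔ T : Submodule ℂ (EuclideanSpace ℂ (Fin n))) ≤ n := by
    simpa using (S ⊔ T).finrank_le
  have hpos : 0 < Module.finrank ℂ (S ⊓ T : Submodule ℂ (EuclideanSpace ℂ (Fin n))) := by
    have hjn := j.isLt
    omega
  obtain ⟨⟨x, hxST⟩, hx0'⟩ := Module.finrank_pos_iff_exists_ne_zero.1 hpos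
  have hx0 : x ≠ 0 := fun h => hx0' (Subtype.ext h)
  have hxS : x ∈ S := hxST.1
  have hxT : x ∈ T := hxST.2
  have hxnorm : (0 : ℝ) < ‖x‖ ^ 2 := by
    have h := norm_pos_iff.mpr hx0
    positivity
  set c₁ := eigDesc hH j
  set μ := eigDesc hB j
  -- lower bound on the Hermitian part quadratic form
  have h1 : c₁ * ‖x‖ ^ 2 ≤ (inner ℂ x (mv (hermPart X) x) : ℂ).re :=
    quad_lower_bound hH s₁ c₁ (fun i hi => eigDesc_le_of_mem_top hH j hi) x hxS
  -- upper bound on the Gram quadratic form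
  have h2 : (inner ℂ x (mv (Xᴴ * X) x) : ℂ).re ≤ μ * ‖x‖ ^ 2 :=
    quad_upper_bound hB s₂ μ (fun i hi => le_eigDesc_of_mem_bot hB j hi) x hxT
  -- the Hermitian part form equals the real part of the X form
  have h3 : (inner ℂ x (mv (hermPart X) x) : ℂ).re = (inner ℂ x (mv X x) : ℂ).re := by
    have hsplit : mv (hermPart X) x = (1/2 : ℂ) • (mv X x + mv Xᴴ x) := by
      apply (WithLp.equiv 2 _).injective
      simp [mv, hermPart, Matrix.add_mulVec, Matrix.smul_mulVec]
    have hconj : (inner ℂ x (mv Xᴴ x) : ℂ) = starRingEnd ℂ (inner ℂ x (mv X x) : ℂ) := by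
      rw [← inner_mv_left X x x, inner_conj_symm]
    rw [hsplit, inner_smul_right, inner_add_right, hconj]
    have hz := (inner ℂ x (mv X x) : ℂ)
    set z := (inner ℂ x (mv X x) : ℂ)
    simp [Complex.add_re, Complex.conj_re, Complex.mul_re]
    ring
  -- Cauchy-Schwarz step
  have h4 : (inner ℂ x (mv X x) : ℂ).re ≤ ‖x‖ * ‖mv X x‖ := by
    calc (inner ℂ x (mv X x) : ℂ).re ≤ ‖(inner ℂ x (mv X x) : ℂ)‖ := Complex.re_le_norm _
    _ ≤ ‖x‖ * ‖mv X x‖ := norm_inner_le_norm x (mv X x)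
  -- norm of X x in terms of the Gram form
  have h5 : ‖mv X x‖ ^ 2 = (inner ℂ x (mv (Xᴴ * X) x) : ℂ).re := by
    rw [← mv_mv, ← inner_mv_right X x (mv X x)]
    exact (inner_self_eq_norm_sq (𝕜 := ℂ) (mv X x)).symm
  -- hence ‖mv X x‖ ≤ √μ * ‖x‖
  have hmu : ‖mv X x‖ ^ 2 ≤ μ * ‖x‖ ^ 2 := by rw [h5]; exact h2
  have hmu0 : 0 ≤ μ := by nlinarith [sq_nonneg ‖mv X x‖]
  have h6 : ‖mv X x‖ ≤ Real.sqrt μ * ‖x‖ := by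
    have h := Real.sqrt_le_sqrt hmu
    rwa [Real.sqrt_sq (norm_nonneg _), Real.sqrt_mul hmu0, Real.sqrt_sq (norm_nonneg x)] at h
  have hchain : c₁ * ‖x‖ ^ 2 ≤ Real.sqrt μ * ‖x‖ ^ 2 := by
    calc c₁ * ‖x‖ ^ 2 ≤ (inner ℂ x (mv X x) : ℂ).re := h3 ▸ h1
    _ ≤ ‖x‖ * ‖mv X x‖ := h4
    _ ≤ ‖x‖ * (Real.sqrt μ * ‖x‖) := by
        exact mul_le_mul_of_nonneg_left h6 (norm_nonneg x)
    _ = Real.sqrt μ * ‖x‖ ^ 2 := by ring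
  have : c₁ ≤ Real.sqrt μ := le_of_mul_le_mul_right (by simpa [mul_comm] using hchain) hxnorm
  simpa [singVal, c₁, μ, hH, hB] using this
end

section
/- For any n×n complex matrix X and each j = 1,…,n, σ_j(X) + σ_{n−j+1}(I−X) ≥ 1, where σ_k denotes the k-th largest singular value. -/
open Matrix
open scoped ComplexOrder

lemma singVal_nonneg {n : ℕ} (X : Matrix (Fin n) (Fin n) ℂ) (j : Fin n) :
    0 ≤ singVal X j := Real.sqrt_nonneg _

lemma exists_subspace {n : ℕ} (X : Matrix (Fin n) (Fin n) ℂ) (j : Fin n) :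
    ∃ V : Submodule ℂ (EuclideanSpace ℂ (Fin n)),
      n - j.val ≤ Module.finrank ℂ V ∧
      ∀ v ∈ V, ‖Matrix.toEuclideanLin X v‖ ≤ singVal X j * ‖v‖ := by
  classical
  set hP := Matrix.posSemidef_conjTranspose_mul_self X with hPdef
  set hA := hP.isHermitian with hAdef
  set μ := hA.eigenvalues with hμdef
  set u := hA.eigenvectorBasis with hudef
  set c : ℝ := eigDesc hA j with hcdef
  have hc0 : 0 ≤ c := hP.eigenvalues_nonneg _
  have hσsq : singVal X j ^ 2 = c := Real.sq_sqrt hc0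
  set S : Finset (Fin n) := Finset.univ.filter (fun i => μ i ≤ c) with hSdef
  -- cardinality bound
  have hScard : n - j.val ≤ S.card := by
    have hmono := Tuple.monotone_sort μ
    have hsub : (Finset.Iic j.rev).image (Tuple.sort μ) ⊆ S := by
      intro i hi
      simp only [Finset.mem_image, Finset.mem_Iic] at hi
      obtain ⟨m, hm, rfl⟩ := hi
      simp only [hSdef, Finset.mem_filter, Finset.mem_univ, true_and]
      exact hmono hm
    have hcard : ((Finset.Iic j.rev).image (Tuple.sort μ)).card = (Finset.Iic j.rev).card :=
      Finset.card_image_of_injective _ (Tuple.sort μ).injective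
    have hle := Finset.card_le_card hsub
    rw [hcard] at hle
    have hIic : (Finset.Iic j.rev).card = j.rev.val + 1 := by simp [Fin.card_Iic]
    have hrev : j.rev.val = n - (j.val + 1) := Fin.val_rev j
    have hj := j.isLt
    omega
  -- the subspace
  set V : Submodule ℂ (EuclideanSpace ℂ (Fin n)) :=
    Submodule.span ℂ (Set.range (fun i : S => u i)) with hVdef
  refine ⟨V, ?_, ?_⟩
  · have hli : LinearIndependent ℂ (fun i : S => u i) :=
      (u.orthonormal.comp _ Subtype.val_injective).linearIndependent
    rw [hVdef, finrank_span_eq_card hli, Fintype.card_coe]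
    exact hScard
  · intro v hv
    set A := Xᴴ * X with hAdef'
    set L := Matrix.toEuclideanLin X with hLdef
    -- eigen equation in EuclideanSpace
    have heig : ∀ i, Matrix.toEuclideanLin A (u i) = (μ i : ℂ) • (u i) := by
      intro i
      have := hA.mulVec_eigenvectorBasis i
      apply PiLp.ext; intro k
      simpa [Matrix.toEuclideanLin_apply] using congrFun this k
    -- coefficients vanish off S
    have hcoef : ∀ i ∉ S, u.repr v i = 0 := by
      intro i hi
      set f : EuclideanSpace ℂ (Fin n) →ₗ[ℂ] ℂ :=
        ((EuclideanSpace.proj i : EuclideanSpace ℂ (Fin n) →L[ℂ] ℂ) : EuclideanSpace ℂ (Fin n) →ₗ[ℂ] ℂ).comp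
          ((u.repr.toLinearEquiv : EuclideanSpace ℂ (Fin n) ≃ₗ[ℂ] EuclideanSpace ℂ (Fin n)).toLinearMap)
        with hfdef
      have hVker : V ≤ LinearMap.ker f := by
        rw [hVdef, Submodule.span_le]
        rintro w ⟨⟨k, hk⟩, rfl⟩
        have hik : i ≠ k := fun h => hi (h ▸ hk)
        simp only [SetLike.mem_coe, LinearMap.mem_ker, hfdef, LinearMap.comp_apply,
          LinearMap.proj_apply, LinearEquiv.coe_coe]
        show u.repr (u k) i = 0
        rw [OrthonormalBasis.repr_self]
        simp [EuclideanSpace.single_apply, hik]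
      have := hVker hv
      simpa [hfdef] using this
    -- repr of A v
    have hAv : Matrix.toEuclideanLin A v = ∑ i, (u.repr v i * (μ i : ℂ)) • u i := by
      conv_lhs => rw [← u.sum_repr v]
      rw [map_sum]
      refine Finset.sum_congr rfl fun i _ => ?_
      rw [_root_.map_smul, heig i, smul_smul]
    have hreprAv : ∀ i, u.repr (Matrix.toEuclideanLin A v) i = u.repr v i * (μ i : ℂ) := by
      intro i
      rw [OrthonormalBasis.repr_apply_apply, hAv, inner_sum]
      simp [inner_smul_right, orthonormal_iff_ite.mp u.orthonormal]
    -- inner product computation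
    have hinner : (inner ℂ v (Matrix.toEuclideanLin A v) : ℂ) =
        ∑ i, ((μ i * ‖u.repr v i‖ ^ 2 : ℝ) : ℂ) := by
      rw [← u.repr.inner_map_map v (Matrix.toEuclideanLin A v), PiLp.inner_apply]
      refine Finset.sum_congr rfl fun i _ => ?_
      rw [hreprAv i]
      simp only [RCLike.inner_apply]
      rw [show (u.repr v i * (μ i : ℂ)) * (starRingEnd ℂ) (u.repr v i)
          = (μ i : ℂ) * (u.repr v i * (starRingEnd ℂ) (u.repr v i)) by ring]
      rw [RCLike.mul_conj]
      push_cast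
      rfl
    -- relate to ‖L v‖
    have hadj : Matrix.toEuclideanLin A = (LinearMap.adjoint L).comp L := by
      rw [hAdef']
      rw [Matrix.toEuclideanLin_eq_toLin, Matrix.toLin_mul _ (PiLp.basisFun 2 ℂ (Fin n)) _]
      rw [← Matrix.toEuclideanLin_eq_toLin, Matrix.toEuclideanLin_conjTranspose_eq_adjoint]
    have hnorm : ‖L v‖ ^ 2 = ∑ i, μ i * ‖u.repr v i‖ ^ 2 := by
      have h1 : (inner ℂ v (Matrix.toEuclideanLin A v) : ℂ) = inner ℂ (L v) (L v) := by
        rw [hadj]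
        exact LinearMap.adjoint_inner_right L v (L v)
      have h2 := congrArg Complex.re (h1.symm.trans hinner)
      have h3 : ‖L v‖ ^ 2 = Complex.re (inner ℂ (L v) (L v)) :=
        (inner_self_eq_norm_sq (𝕜 := ℂ) _).symm
      rw [h3, h2, Complex.re_sum]
      simp [← Complex.ofReal_pow]
    -- the bound
    have hsumv : ∑ i, ‖u.repr v i‖ ^ 2 = ‖v‖ ^ 2 := by
      have : (inner ℂ v v : ℂ) = ∑ i, ((‖u.repr v i‖ ^ 2 : ℝ) : ℂ) := by
        rw [← u.repr.inner_map_map v v, PiLp.inner_apply]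
        refine Finset.sum_congr rfl fun i _ => ?_
        simp only [RCLike.inner_apply]
        rw [RCLike.mul_conj]
        norm_cast
      have h2 := congrArg Complex.re this
      have h3 : ‖v‖ ^ 2 = Complex.re (inner ℂ v v : ℂ) :=
        (inner_self_eq_norm_sq (𝕜 := ℂ) _).symm
      rw [h3, h2, Complex.re_sum]
      simp [← Complex.ofReal_pow]
    have hbound : ‖L v‖ ^ 2 ≤ c * ‖v‖ ^ 2 := by
      rw [hnorm, ← hsumv, Finset.mul_sum]
      refine Finset.sum_le_sum fun i _ => ?_
      by_cases hiS : i ∈ S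
      · have : μ i ≤ c := by
          simpa [hSdef] using hiS
        exact mul_le_mul_of_nonneg_right this (sq_nonneg _)
      · rw [hcoef i hiS]
        simp
    have hfinal : ‖L v‖ ^ 2 ≤ (singVal X j * ‖v‖) ^ 2 := by
      rw [mul_pow, hσsq]
      exact hbound
    calc ‖L v‖ = Real.sqrt (‖L v‖ ^ 2) := (Real.sqrt_sq (norm_nonneg _)).symm
      _ ≤ Real.sqrt ((singVal X j * ‖v‖) ^ 2) := Real.sqrt_le_sqrt hfinal
      _ = singVal X j * ‖v‖ := Real.sqrt_sq (mul_nonneg (singVal_nonneg X j) (norm_nonneg v))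

theorem stmt5 {n : ℕ} (X : Matrix (Fin n) (Fin n) ℂ) (j : Fin n) :
    1 ≤ singVal X j + singVal (1 - X) j.rev := by
  obtain ⟨V1, hV1d, hV1⟩ := exists_subspace X j
  obtain ⟨V2, hV2d, hV2⟩ := exists_subspace (1 - X) j.rev
  have hn : Module.finrank ℂ (EuclideanSpace ℂ (Fin n)) = n := finrank_euclideanSpace_fin
  have hrev : j.rev.val = n - (j.val + 1) := Fin.val_rev j
  have hj := j.isLt
  have hpos : 0 < Module.finrank ℂ (V1 ⊓ V2 : Submodule ℂ _) := by
    have hsum := Submodule.finrank_sup_add_finrank_inf_eq V1 V2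
    have hle : Module.finrank ℂ (V1 ⊔ V2 : Submodule ℂ _) ≤ n := le_trans (Submodule.finrank_le _) (le_of_eq hn)
    omega
  have hne : (V1 ⊓ V2 : Submodule ℂ _) ≠ ⊥ := by
    intro h
    rw [h] at hpos
    simp at hpos
  obtain ⟨v, hvmem, hvne⟩ := Submodule.exists_mem_ne_zero_of_ne_bot hne
  have hdecomp : Matrix.toEuclideanLin X v + Matrix.toEuclideanLin (1 - X) v = v := by
    have h1 : Matrix.toEuclideanLin (X + (1 - X)) =
        Matrix.toEuclideanLin X + Matrix.toEuclideanLin (1 - X) := map_add _ _ _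
    have h2 : (Matrix.toEuclideanLin (X + (1 - X))) v = v := by
      rw [show X + (1 - X) = (1 : Matrix (Fin n) (Fin n) ℂ) by abel]
      simp [Matrix.toEuclideanLin_apply]
    rw [h1] at h2
    simpa using h2
  have hvpos : 0 < ‖v‖ := norm_pos_iff.mpr hvne
  have key : 1 * ‖v‖ ≤ (singVal X j + singVal (1 - X) j.rev) * ‖v‖ := by
    rw [one_mul]
    calc ‖v‖ = ‖Matrix.toEuclideanLin X v + Matrix.toEuclideanLin (1 - X) v‖ := by
          rw [hdecomp]
      _ ≤ ‖Matrix.toEuclideanLin X v‖ + ‖Matrix.toEuclideanLin (1 - X) v‖ := norm_add_le _ _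
      _ ≤ singVal X j * ‖v‖ + singVal (1 - X) j.rev * ‖v‖ :=
          add_le_add (hV1 v hvmem.1) (hV2 v hvmem.2)
      _ = (singVal X j + singVal (1 - X) j.rev) * ‖v‖ := by ring
  exact le_of_mul_le_mul_right key hvpos
end

section
/- Let A be an n×n strict contraction with singular values r_1 ≥ … ≥ r_n (all < 1). Then for each j = 1,…,n, the j-th largest eigenvalue of the positive definite matrix (I−A*)⁻¹(I−A*A)(I−A)⁻¹ is at most (1+r_j)/(1−r_j). -/
set_option maxHeartbeats 1000000

open Matrix
open scoped ComplexOrder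

variable {n : ℕ}

/-- sum of normSq of entries -/
noncomputable def nsum (x : Fin n → ℂ) : ℝ := ∑ i, Complex.normSq (x i)

lemma nsum_nonneg (x : Fin n → ℂ) : 0 ≤ nsum x :=
  Finset.sum_nonneg fun i _ => Complex.normSq_nonneg _

lemma nsum_eq_zero_iff (x : Fin n → ℂ) : nsum x = 0 ↔ x = 0 := by
  constructor
  · intro h
    funext i
    have := (Finset.sum_eq_zero_iff_of_nonneg (fun i _ => Complex.normSq_nonneg (x i))).mp h i
      (Finset.mem_univ i)
    simpa [Complex.normSq_eq_zero] using this
  · intro h; simp [h, nsum]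

lemma star_dot_self (x : Fin n → ℂ) : star x ⬝ᵥ x = (nsum x : ℂ) := by
  simp only [dotProduct, nsum, Pi.star_apply, Complex.ofReal_sum]
  refine Finset.sum_congr rfl fun i _ => ?_
  rw [Complex.normSq_eq_conj_mul_self]
  rfl

namespace SpecHelper

variable {B : Matrix (Fin n) (Fin n) ℂ} (hB : B.IsHermitian)

noncomputable def coords (x : Fin n → ℂ) : Fin n → ℂ :=
  (star (hB.eigenvectorUnitary : Matrix (Fin n) (Fin n) ℂ)) *ᵥ x

lemma recover (x : Fin n → ℂ) :
    (hB.eigenvectorUnitary : Matrix (Fin n) (Fin n) ℂ) *ᵥ coords hB x = x := by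
  rw [coords, mulVec_mulVec, (Matrix.mem_unitaryGroup_iff).mp (hB.eigenvectorUnitary).2,
    one_mulVec]

lemma star_coords (x : Fin n → ℂ) :
    star (coords hB x) = star x ᵥ* (hB.eigenvectorUnitary : Matrix (Fin n) (Fin n) ℂ) := by
  rw [coords, star_mulVec, star_eq_conjTranspose, conjTranspose_conjTranspose]

lemma quad_eq (x : Fin n → ℂ) :
    star x ⬝ᵥ (B *ᵥ x) =
      ((∑ i, hB.eigenvalues i * Complex.normSq (coords hB x i) : ℝ) : ℂ) := by
  conv_lhs => rw [hB.spectral_theorem, Unitary.conjStarAlgAut_apply]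
  rw [← mulVec_mulVec, ← coords, ← mulVec_mulVec, dotProduct_mulVec, ← star_coords]
  simp only [mulVec_diagonal, dotProduct, Pi.star_apply, Function.comp_apply]
  rw [Complex.ofReal_sum]
  refine Finset.sum_congr rfl fun i _ => ?_
  rw [Complex.ofReal_mul, Complex.normSq_eq_conj_mul_self, Complex.star_def]
  show _ * (((hB.eigenvalues i : ℝ) : ℂ) * _) = _
  ring

lemma nsum_coords (x : Fin n → ℂ) : nsum (coords hB x) = nsum x := by
  have h : star (coords hB x) ⬝ᵥ coords hB x = star x ⬝ᵥ x := by
    rw [star_coords, coords, ← dotProduct_mulVec, mulVec_mulVec,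
      (Matrix.mem_unitaryGroup_iff).mp (hB.eigenvectorUnitary).2, one_mulVec]
  rw [star_dot_self, star_dot_self] at h
  exact_mod_cast h

lemma coords_eq_zero_of_mem_span {S : Finset (Fin n)} {x : Fin n → ℂ}
    (hx : x ∈ Submodule.span ℂ ((fun i => ⇑(hB.eigenvectorBasis i)) '' (S : Set (Fin n))))
    {i : Fin n} (hi : i ∉ S) : coords hB x i = 0 := by
  have : Submodule.span ℂ ((fun i => ⇑(hB.eigenvectorBasis i)) '' (S : Set (Fin n))) ≤
      LinearMap.ker ((LinearMap.proj i).comp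
        (Matrix.mulVecLin (star (hB.eigenvectorUnitary : Matrix (Fin n) (Fin n) ℂ)))) := by
    rw [Submodule.span_le]
    rintro _ ⟨k, hk, rfl⟩
    simp only [SetLike.mem_coe, LinearMap.mem_ker, LinearMap.comp_apply, LinearMap.proj_apply,
      Matrix.mulVecLin_apply]
    rw [hB.star_eigenvectorUnitary_mulVec]
    exact Pi.single_eq_of_ne (fun h : i = k => hi (h ▸ hk)) 1
  exact this hx

lemma linearIndependent_eigenvectorBasis :
    LinearIndependent ℂ (fun i => ⇑(hB.eigenvectorBasis i) : Fin n → Fin n → ℂ) := by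
  have hinj : Function.Injective
      (Matrix.mulVecLin (hB.eigenvectorUnitary : Matrix (Fin n) (Fin n) ℂ)) := by
    intro a b hab
    have := congrArg (Matrix.mulVecLin
      (star (hB.eigenvectorUnitary : Matrix (Fin n) (Fin n) ℂ))) hab
    simpa [Matrix.mulVecLin_apply, Matrix.mulVec_mulVec,
      (Matrix.mem_unitaryGroup_iff').mp (hB.eigenvectorUnitary).2, Matrix.one_mulVec] using this
  have h1 : LinearIndependent ℂ (fun i : Fin n => (Pi.single i 1 : Fin n → ℂ)) := by
    have := (Pi.basisFun ℂ (Fin n)).linearIndependent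
    rwa [show ⇑(Pi.basisFun ℂ (Fin n)) = fun i => (Pi.single i 1 : Fin n → ℂ) from
      funext fun i => Pi.basisFun_apply ℂ (Fin n) i] at this
  have h2 := h1.map' _ (LinearMap.ker_eq_bot_of_injective hinj)
  have : (fun i => ⇑(hB.eigenvectorBasis i)) =
      (fun i => Matrix.mulVecLin (hB.eigenvectorUnitary : Matrix (Fin n) (Fin n) ℂ)
        (Pi.single i 1)) := by
    funext i
    simp [Matrix.mulVecLin_apply, hB.eigenvectorUnitary_mulVec]
  rw [this]
  exact h2

lemma finrank_span_eigenvectors (S : Finset (Fin n)) :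
    Module.finrank ℂ (Submodule.span ℂ
      ((fun i => ⇑(hB.eigenvectorBasis i)) '' (S : Set (Fin n)))) = S.card := by
  classical
  have li := (linearIndependent_eigenvectorBasis hB).comp
    (Subtype.val : {i // i ∈ S} → Fin n) Subtype.val_injective
  have hr : Set.range ((fun i => ⇑(hB.eigenvectorBasis i)) ∘ (Subtype.val : {i // i ∈ S} → Fin n))
      = (fun i => ⇑(hB.eigenvectorBasis i)) '' (S : Set (Fin n)) := by
    rw [Set.range_comp, Subtype.range_coe]
  rw [← hr, finrank_span_eq_card li, Fintype.card_coe]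

lemma card_filter_ge (j : Fin n) :
    j.val + 1 ≤ (Finset.univ.filter fun i => eigDesc hB j ≤ hB.eigenvalues i).card := by
  classical
  have h := Finset.card_le_card_of_injOn (f := fun k => Tuple.sort hB.eigenvalues k)
    (s := Finset.Ici j.rev)
    (t := Finset.univ.filter fun i => eigDesc hB j ≤ hB.eigenvalues i)
    (fun k hk => by
      simp only [Finset.mem_filter, Finset.mem_univ, true_and]
      exact Finset.mem_coe.mpr (Finset.mem_filter.mpr ⟨Finset.mem_univ _,
        Tuple.monotone_sort hB.eigenvalues (Finset.mem_Ici.mp hk)⟩))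
    (fun a _ b _ hab => (Tuple.sort hB.eigenvalues).injective hab)
  rw [Fin.card_Ici] at h
  have := j.isLt
  have hrev : (j.rev : ℕ) = n - (j + 1) := Fin.val_rev j
  omega

lemma card_filter_le (j : Fin n) :
    n - j.val ≤ (Finset.univ.filter fun i => hB.eigenvalues i ≤ eigDesc hB j).card := by
  classical
  have h := Finset.card_le_card_of_injOn (f := fun k => Tuple.sort hB.eigenvalues k)
    (s := Finset.Iic j.rev)
    (t := Finset.univ.filter fun i => hB.eigenvalues i ≤ eigDesc hB j)
    (fun k hk => by
      simp only [Finset.mem_filter, Finset.mem_univ, true_and]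
      exact Finset.mem_coe.mpr (Finset.mem_filter.mpr ⟨Finset.mem_univ _,
        Tuple.monotone_sort hB.eigenvalues (Finset.mem_Iic.mp hk)⟩))
    (fun a _ b _ hab => (Tuple.sort hB.eigenvalues).injective hab)
  rw [Fin.card_Iic] at h
  have := j.isLt
  have hrev : (j.rev : ℕ) = n - (j + 1) := Fin.val_rev j
  omega

lemma exists_eigDesc_eq (i : Fin n) : ∃ k, eigDesc hB k = hB.eigenvalues i := by
  refine ⟨((Tuple.sort hB.eigenvalues).symm i).rev, ?_⟩
  simp [eigDesc, Fin.rev_rev]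

noncomputable def quadSum (x : Fin n → ℂ) : ℝ :=
  ∑ i, hB.eigenvalues i * Complex.normSq (coords hB x i)

lemma quad_eq' (x : Fin n → ℂ) : star x ⬝ᵥ (B *ᵥ x) = ((quadSum hB x : ℝ) : ℂ) :=
  quad_eq hB x

lemma quadSum_le {S : Finset (Fin n)} {x : Fin n → ℂ} {c : ℝ}
    (hc : ∀ i ∈ S, hB.eigenvalues i ≤ c)
    (hx : x ∈ Submodule.span ℂ ((fun i => ⇑(hB.eigenvectorBasis i)) '' (S : Set (Fin n)))) :
    quadSum hB x ≤ c * nsum x := by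
  classical
  rw [← nsum_coords hB x, nsum, Finset.mul_sum, quadSum]
  refine Finset.sum_le_sum fun i _ => ?_
  by_cases hi : i ∈ S
  · exact mul_le_mul_of_nonneg_right (hc i hi) (Complex.normSq_nonneg _)
  · rw [coords_eq_zero_of_mem_span hB hx hi]
    simp

lemma quadSum_ge {S : Finset (Fin n)} {x : Fin n → ℂ} {c : ℝ}
    (hc : ∀ i ∈ S, c ≤ hB.eigenvalues i)
    (hx : x ∈ Submodule.span ℂ ((fun i => ⇑(hB.eigenvectorBasis i)) '' (S : Set (Fin n)))) :
    c * nsum x ≤ quadSum hB x := by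
  classical
  rw [← nsum_coords hB x, nsum, Finset.mul_sum, quadSum]
  refine Finset.sum_le_sum fun i _ => ?_
  by_cases hi : i ∈ S
  · exact mul_le_mul_of_nonneg_right (hc i hi) (Complex.normSq_nonneg _)
  · rw [coords_eq_zero_of_mem_span hB hx hi]
    simp

end SpecHelper

lemma nsum_eq_norm_sq (u : Fin n → ℂ) :
    nsum u = ‖(WithLp.equiv 2 (Fin n → ℂ)).symm u‖ ^ 2 := by
  rw [EuclideanSpace.norm_eq, Real.sq_sqrt (Finset.sum_nonneg fun i _ => sq_nonneg _)]
  refine Finset.sum_congr rfl fun i _ => ?_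
  show Complex.normSq (u i) = ‖u i‖ ^ 2
  rw [← Complex.sq_norm]

lemma sqrt_sub_sq_le_nsum_sub (u v : Fin n → ℂ) :
    (Real.sqrt (nsum u) - Real.sqrt (nsum v)) ^ 2 ≤ nsum (u - v) := by
  set u' := (WithLp.equiv 2 (Fin n → ℂ)).symm u
  set v' := (WithLp.equiv 2 (Fin n → ℂ)).symm v
  have hu : Real.sqrt (nsum u) = ‖u'‖ := by
    rw [nsum_eq_norm_sq, Real.sqrt_sq (norm_nonneg _)]
  have hv : Real.sqrt (nsum v) = ‖v'‖ := by
    rw [nsum_eq_norm_sq, Real.sqrt_sq (norm_nonneg _)]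
  have hsub : nsum (u - v) = ‖u' - v'‖ ^ 2 := by
    rw [nsum_eq_norm_sq]
    congr 1
  rw [hu, hv, hsub]
  have h1 : |‖u'‖ - ‖v'‖| ≤ ‖u' - v'‖ := abs_norm_sub_norm_le u' v'
  calc (‖u'‖ - ‖v'‖) ^ 2 = |‖u'‖ - ‖v'‖| ^ 2 := (sq_abs _).symm
  _ ≤ ‖u' - v'‖ ^ 2 := by
      exact pow_le_pow_left₀ (abs_nonneg _) h1 2

lemma quad_conjTranspose_mul (A : Matrix (Fin n) (Fin n) ℂ) (v : Fin n → ℂ) :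
    star v ⬝ᵥ ((Aᴴ * A) *ᵥ v) = ((nsum (A *ᵥ v) : ℝ) : ℂ) := by
  rw [← mulVec_mulVec, dotProduct_mulVec, ← star_mulVec, star_dot_self]

lemma quad_identity (A : Matrix (Fin n) (Fin n) ℂ) (hdet : IsUnit (1 - A).det)
    (hdetH : IsUnit (1 - Aᴴ).det) (y : Fin n → ℂ) :
    star ((1 - A) *ᵥ y) ⬝ᵥ (((1 - Aᴴ)⁻¹ * (1 - Aᴴ * A) * (1 - A)⁻¹) *ᵥ ((1 - A) *ᵥ y))
      = ((nsum y : ℝ) : ℂ) - ((nsum (A *ᵥ y) : ℝ) : ℂ) := by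
  set M := (1 - Aᴴ)⁻¹ * (1 - Aᴴ * A) * (1 - A)⁻¹ with hMdef
  have hsandwich : (1 - A)ᴴ * (M * (1 - A)) = 1 - Aᴴ * A := by
    rw [show (1 - A)ᴴ = 1 - Aᴴ by rw [Matrix.conjTranspose_sub, Matrix.conjTranspose_one]]
    rw [hMdef, Matrix.mul_assoc ((1 - Aᴴ)⁻¹) _ _, ← Matrix.mul_assoc (1 - Aᴴ) _ _,
      Matrix.mul_nonsing_inv_cancel_left _ _ hdetH, Matrix.mul_assoc,
      Matrix.nonsing_inv_mul _ hdet, Matrix.mul_one]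
  rw [star_mulVec, mulVec_mulVec, ← dotProduct_mulVec, mulVec_mulVec, ← Matrix.mul_assoc,
    Matrix.mul_assoc _ M _, hsandwich, Matrix.sub_mulVec, Matrix.one_mulVec,
    dotProduct_sub, star_dot_self, quad_conjTranspose_mul]


section Main

variable {A : Matrix (Fin n) (Fin n) ℂ}

lemma eigQ_lt_one (hA : ∀ j, singVal A j < 1) (i : Fin n) :
    ((Matrix.posSemidef_conjTranspose_mul_self A).isHermitian).eigenvalues i < 1 := by
  set hQ := (Matrix.posSemidef_conjTranspose_mul_self A).isHermitian
  obtain ⟨k, hk⟩ := SpecHelper.exists_eigDesc_eq hQ i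
  have h0 : 0 ≤ hQ.eigenvalues i := (Matrix.posSemidef_conjTranspose_mul_self A).eigenvalues_nonneg i
  have := hA k
  rw [singVal, hk] at this
  nlinarith [Real.sq_sqrt h0, Real.sqrt_nonneg (hQ.eigenvalues i), this]

lemma det_one_sub_isUnit (hA : ∀ j, singVal A j < 1) : IsUnit (1 - A).det := by
  classical
  rw [isUnit_iff_ne_zero]
  intro hdet
  obtain ⟨v, hv0, hv⟩ := (Matrix.exists_mulVec_eq_zero_iff).mpr hdet
  have hAv : A *ᵥ v = v := by
    have := hv
    rw [Matrix.sub_mulVec, Matrix.one_mulVec, sub_eq_zero] at this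
    exact this.symm
  set hQ := (Matrix.posSemidef_conjTranspose_mul_self A).isHermitian
  have h1 : ((SpecHelper.quadSum hQ v : ℝ) : ℂ) = ((nsum v : ℝ) : ℂ) := by
    rw [← SpecHelper.quad_eq' hQ v, quad_conjTranspose_mul A v, hAv]
  have h2 : SpecHelper.quadSum hQ v = nsum v := by exact_mod_cast h1
  have h3 : nsum (SpecHelper.coords hQ v) = nsum v := SpecHelper.nsum_coords hQ v
  have hvc : SpecHelper.coords hQ v ≠ 0 := by
    intro h
    apply hv0
    have := SpecHelper.recover hQ v
    rw [h, Matrix.mulVec_zero] at this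
    exact this.symm
  have hlt : SpecHelper.quadSum hQ v < nsum (SpecHelper.coords hQ v) := by
    rw [SpecHelper.quadSum, nsum]
    obtain ⟨i0, hi0⟩ := Function.ne_iff.mp hvc
    refine Finset.sum_lt_sum (fun i _ => ?_) ⟨i0, Finset.mem_univ i0, ?_⟩
    · nlinarith [(eigQ_lt_one hA i).le, Complex.normSq_nonneg (SpecHelper.coords hQ v i),
        (Matrix.posSemidef_conjTranspose_mul_self A).eigenvalues_nonneg i]
    · have hpos : 0 < Complex.normSq (SpecHelper.coords hQ v i0) := by
        have := Complex.normSq_pos.mpr hi0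
        simpa using this
      nlinarith [eigQ_lt_one hA i0]
  rw [h3, h2] at hlt
  exact lt_irrefl _ hlt

end Main

lemma endgame {lam r nx nsy nsA : ℝ} (hlam : 0 < lam) (hr0 : 0 ≤ r) (hr1 : r < 1)
    (hlow : lam * nx ≤ nsy - nsA) (htri : (Real.sqrt nsy - Real.sqrt nsA) ^ 2 ≤ nx)
    (hsy : 0 < nsy) (hsA : 0 ≤ nsA) (hAr : nsA ≤ r ^ 2 * nsy) :
    lam ≤ (1 + r) / (1 - r) := by
  set ny := Real.sqrt nsy with hny
  set na := Real.sqrt nsA with hna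
  have hny2 : ny ^ 2 = nsy := Real.sq_sqrt hsy.le
  have hna2 : na ^ 2 = nsA := Real.sq_sqrt hsA
  have hnypos : 0 < ny := Real.sqrt_pos.mpr hsy
  have hnanneg : 0 ≤ na := Real.sqrt_nonneg _
  have hnar : na ≤ r * ny := by
    rw [hna, hny]
    calc Real.sqrt nsA ≤ Real.sqrt (r ^ 2 * nsy) := Real.sqrt_le_sqrt hAr
    _ = r * Real.sqrt nsy := by rw [Real.sqrt_mul (sq_nonneg r), Real.sqrt_sq hr0]
  have hdpos : 0 < ny - na := by nlinarith
  have hkey : lam * (ny - na) ^ 2 ≤ ny ^ 2 - na ^ 2 := by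
    calc lam * (ny - na) ^ 2 ≤ lam * nx := mul_le_mul_of_nonneg_left htri hlam.le
    _ ≤ nsy - nsA := hlow
    _ = ny ^ 2 - na ^ 2 := by rw [hny2, hna2]
  have hstep : lam * (ny - na) ≤ ny + na := by
    have : lam * (ny - na) * (ny - na) ≤ (ny + na) * (ny - na) := by nlinarith
    exact le_of_mul_le_mul_right this hdpos
  rw [le_div_iff₀ (by linarith : (0:ℝ) < 1 - r)]
  have hfin : lam * (1 - r) * ny ≤ (1 + r) * ny := by nlinarith
  exact le_of_mul_le_mul_right hfin hnypos

theorem stmt7 {n : ℕ} (A : Matrix (Fin n) (Fin n) ℂ) (hA : ∀ j, singVal A j < 1)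
    (hM : ((1 - Aᴴ)⁻¹ * (1 - Aᴴ * A) * (1 - A)⁻¹).IsHermitian) (j : Fin n) :
    eigDesc hM j ≤ (1 + singVal A j) / (1 - singVal A j) := by
  classical
  have hr0 : 0 ≤ singVal A j := Real.sqrt_nonneg _
  have hr1 : singVal A j < 1 := hA j
  set r := singVal A j with hrdef
  set lam := eigDesc hM j with hlamdef
  -- trivial case
  rcases le_or_gt lam 0 with hlam | hlam
  · exact le_trans hlam (div_nonneg (by linarith) (by linarith))
  have hQ := (Matrix.posSemidef_conjTranspose_mul_self A).isHermitian
  have hrr : eigDesc hQ j = r ^ 2 := by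
    have h0 : 0 ≤ eigDesc hQ j := by
      exact (Matrix.posSemidef_conjTranspose_mul_self A).eigenvalues_nonneg _
    rw [hrdef, singVal]
    exact (Real.sq_sqrt h0).symm
  -- determinants
  have hdet : IsUnit (1 - A).det := det_one_sub_isUnit hA
  have hdetH : IsUnit (1 - Aᴴ).det := by
    have : (1 - Aᴴ) = (1 - A)ᴴ := by
      rw [Matrix.conjTranspose_sub, Matrix.conjTranspose_one]
    rw [this, Matrix.det_conjTranspose]
    exact hdet.star
  -- injectivity of mulVecLin (1 - A)
  have hinj : Function.Injective (Matrix.mulVecLin (1 - A)) := by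
    intro a b hab
    have := congrArg (Matrix.mulVecLin (1 - A)⁻¹) hab
    simpa only [Matrix.mulVecLin_apply, Matrix.mulVec_mulVec, Matrix.nonsing_inv_mul _ hdet,
      Matrix.one_mulVec] using this
  -- subspaces
  set SM := Finset.univ.filter (fun i => lam ≤ hM.eigenvalues i) with hSM
  set SQ := Finset.univ.filter (fun i => hQ.eigenvalues i ≤ eigDesc hQ j) with hSQ
  set UM := Submodule.span ℂ ((fun i => ⇑(hM.eigenvectorBasis i)) '' (SM : Set (Fin n)))
  set W := Submodule.span ℂ ((fun i => ⇑(hQ.eigenvectorBasis i)) '' (SQ : Set (Fin n)))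
  set V := W.map (Matrix.mulVecLin (1 - A)) with hV
  have hcardM : j.val + 1 ≤ SM.card := SpecHelper.card_filter_ge hM j
  have hcardQ : n - j.val ≤ SQ.card := SpecHelper.card_filter_le hQ j
  have hUMrank : Module.finrank ℂ UM = SM.card := SpecHelper.finrank_span_eigenvectors hM SM
  have hWrank : Module.finrank ℂ W = SQ.card := SpecHelper.finrank_span_eigenvectors hQ SQ
  have hVrank : Module.finrank ℂ V = SQ.card := by
    rw [hV, ← hWrank]
    have hback : (W.map (Matrix.mulVecLin (1 - A))).map (Matrix.mulVecLin (1 - A)⁻¹) = W := by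
      rw [← Submodule.map_comp, ← Matrix.mulVecLin_mul, Matrix.nonsing_inv_mul _ hdet,
        Matrix.mulVecLin_one, Submodule.map_id]
    refine le_antisymm (Submodule.finrank_map_le _ _) ?_
    conv_lhs => rw [← hback]
    exact Submodule.finrank_map_le _ _
  -- nonzero intersection
  have hn : Module.finrank ℂ (Fin n → ℂ) = n := Module.finrank_fin_fun ℂ
  have hsup : Module.finrank ℂ ↥(UM ⊔ V) ≤ n := le_trans (Submodule.finrank_le _) (le_of_eq hn)
  have hinter : 0 < Module.finrank ℂ ↥(UM ⊓ V) := by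
    have heq := Submodule.finrank_sup_add_finrank_inf_eq UM V
    rw [hUMrank, hVrank] at heq
    have hj := j.isLt
    omega
  obtain ⟨x, hxmem, hx0⟩ : ∃ x : Fin n → ℂ, x ∈ UM ⊓ V ∧ x ≠ 0 := by
    obtain ⟨⟨x, hx⟩, hne⟩ := Module.finrank_pos_iff_exists_ne_zero.mp hinter
    exact ⟨x, hx, fun h => hne (Subtype.ext h)⟩
  obtain ⟨hxU, hxV⟩ := hxmem
  obtain ⟨y, hyW, hyx⟩ := Submodule.mem_map.mp hxV
  rw [Matrix.mulVecLin_apply] at hyx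
  have hy0 : y ≠ 0 := by
    intro h
    apply hx0
    rw [← hyx, h, Matrix.mulVec_zero]
  -- quadratic form identity
  have hquadR : SpecHelper.quadSum hM x = nsum y - nsum (A *ᵥ y) := by
    have h := quad_identity A hdet hdetH y
    rw [hyx, SpecHelper.quad_eq' hM x, ← Complex.ofReal_sub] at h
    exact_mod_cast h
  -- lower bound from UM
  have hlow : lam * nsum x ≤ SpecHelper.quadSum hM x := by
    refine SpecHelper.quadSum_ge hM (fun i hi => ?_) hxU
    exact (Finset.mem_filter.mp hi).2
  -- upper bound on A-quadratic form from W
  have hupq : SpecHelper.quadSum hQ y ≤ r ^ 2 * nsum y := by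
    rw [← hrr]
    refine SpecHelper.quadSum_le hQ (fun i hi => ?_) hyW
    exact (Finset.mem_filter.mp hi).2
  have hAy : nsum (A *ᵥ y) = SpecHelper.quadSum hQ y := by
    have h := (quad_conjTranspose_mul A y).symm.trans (SpecHelper.quad_eq' hQ y)
    exact_mod_cast h
  -- conclude
  have hsy : 0 < nsum y :=
    lt_of_le_of_ne (nsum_nonneg y) (fun h => hy0 ((nsum_eq_zero_iff y).mp h.symm))
  have htri : (Real.sqrt (nsum y) - Real.sqrt (nsum (A *ᵥ y))) ^ 2 ≤ nsum x := by
    have hxy : x = y - A *ᵥ y := by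
      rw [← hyx, Matrix.sub_mulVec, Matrix.one_mulVec]
    rw [hxy]
    exact sqrt_sub_sq_le_nsum_sub y (A *ᵥ y)
  exact endgame hlam hr0 hr1 (hquadR ▸ hlow) htri hsy (nsum_nonneg _) (hAy ▸ hupq)
end

section
/- Let A be an n×n strict contraction with largest singular value r_1 < 1. Then ((1−r_1)/(1+r_1))·(I−A*)(I−A) ≤ I−A*A ≤ ((1+r_1)/(1−r_1))·(I−A*)(I−A) in the Loewner order. -/
open Matrix
open scoped ComplexOrder

lemma le_eigDesc_zero {n : ℕ} (hn : 0 < n) {A : Matrix (Fin n) (Fin n) ℂ}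
    (hA : A.IsHermitian) (i : Fin n) : hA.eigenvalues i ≤ eigDesc hA ⟨0, hn⟩ := by
  unfold eigDesc
  have hm := Tuple.monotone_sort hA.eigenvalues
  have h1 : hA.eigenvalues i =
      (hA.eigenvalues ∘ Tuple.sort hA.eigenvalues) ((Tuple.sort hA.eigenvalues)⁻¹ i) := by
    simp
  rw [h1]
  apply hm
  simp only [Fin.le_def, Fin.val_rev, Fin.val_mk]
  have := ((Tuple.sort hA.eigenvalues)⁻¹ i).isLt
  omega

lemma smul_one_sub_psd {n : ℕ} {H : Matrix (Fin n) (Fin n) ℂ} (hH : H.IsHermitian) {c : ℝ}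
    (h : ∀ i, hH.eigenvalues i ≤ c) : ((c : ℂ) • 1 - H).PosSemidef := by
  have hU := (Matrix.mem_unitaryGroup_iff).mp (hH.eigenvectorUnitary).2
  have key : (c : ℂ) • 1 - H =
      (hH.eigenvectorUnitary : Matrix (Fin n) (Fin n) ℂ) *
        (Matrix.diagonal fun i => ((c - hH.eigenvalues i : ℝ) : ℂ)) *
        ((hH.eigenvectorUnitary : Matrix (Fin n) (Fin n) ℂ))ᴴ := by
    conv_lhs => rw [hH.spectral_theorem]
    rw [← Matrix.star_eq_conjTranspose]
    have h1 : (c : ℂ) • (1 : Matrix (Fin n) (Fin n) ℂ) =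
        (hH.eigenvectorUnitary : Matrix (Fin n) (Fin n) ℂ) * ((c : ℂ) • 1) *
          star (hH.eigenvectorUnitary : Matrix (Fin n) (Fin n) ℂ) := by
      rw [Matrix.mul_smul, mul_one, Matrix.smul_mul, hU]
    rw [h1]
    simp only [Unitary.conjStarAlgAut_apply, Unitary.coe_star]
    rw [← Matrix.sub_mul, ← Matrix.mul_sub, Matrix.smul_one_eq_diagonal,
      Matrix.diagonal_sub]
    congr 2
    ext i
    push_cast
    simp
  rw [key]
  apply Matrix.PosSemidef.mul_mul_conjTranspose_same
  rw [Matrix.posSemidef_diagonal_iff]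
  intro i
  rw [Complex.zero_le_real]
  linarith [h i]

lemma key1 (r s u t : ℝ) (hr0 : 0 ≤ r) (hr1 : r < 1) (hs : 0 ≤ s) (hu : 0 ≤ u)
    (hsu : s ≤ r * u) (ht : |t| ≤ u * s) :
    0 ≤ (u ^ 2 - s ^ 2) - (1 - r) / (1 + r) * (u ^ 2 - 2 * t + s ^ 2) := by
  have h1r : (0:ℝ) < 1 + r := by linarith
  rw [div_mul_eq_mul_div, sub_nonneg, div_le_iff₀ h1r]
  obtain ⟨ht1, ht2⟩ := abs_le.mp ht
  nlinarith [mul_nonneg (sub_nonneg.2 hsu) (add_nonneg hs hu)]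

lemma key2 (r s u t : ℝ) (hr0 : 0 ≤ r) (hr1 : r < 1) (hs : 0 ≤ s) (hu : 0 ≤ u)
    (hsu : s ≤ r * u) (ht : |t| ≤ u * s) :
    0 ≤ (1 + r) / (1 - r) * (u ^ 2 - 2 * t + s ^ 2) - (u ^ 2 - s ^ 2) := by
  have h1r : (0:ℝ) < 1 - r := by linarith
  rw [div_mul_eq_mul_div, sub_nonneg, le_div_iff₀ h1r]
  obtain ⟨ht1, ht2⟩ := abs_le.mp ht
  have hsu' : s ≤ u := le_trans hsu (by nlinarith)
  nlinarith [mul_nonneg (sub_nonneg.2 hsu) (sub_nonneg.2 hsu')]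

theorem stmt12 {n : ℕ} (hn : 0 < n) (A : Matrix (Fin n) (Fin n) ℂ) (hA : ∀ j, singVal A j < 1) :
    ((1 - Aᴴ * A) -
        (((1 - singVal A ⟨0, hn⟩) / (1 + singVal A ⟨0, hn⟩) : ℝ) : ℂ) •
          ((1 - Aᴴ) * (1 - A))).PosSemidef ∧
      ((((1 + singVal A ⟨0, hn⟩) / (1 - singVal A ⟨0, hn⟩) : ℝ) : ℂ) •
          ((1 - Aᴴ) * (1 - A)) - (1 - Aᴴ * A)).PosSemidef := by
  set r : ℝ := singVal A ⟨0, hn⟩ with hr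
  have hH := (Matrix.posSemidef_conjTranspose_mul_self A).isHermitian
  -- basic facts about r
  have hr0 : 0 ≤ r := Real.sqrt_nonneg _
  have hr1 : r < 1 := hA _
  have hEnn : 0 ≤ eigDesc hH ⟨0, hn⟩ := by
    unfold eigDesc
    exact (Matrix.posSemidef_conjTranspose_mul_self A).eigenvalues_nonneg _
  have hr2 : r ^ 2 = eigDesc hH ⟨0, hn⟩ := Real.sq_sqrt hEnn
  -- A*A ≤ r^2 • 1
  have hpsd : (((r ^ 2 : ℝ) : ℂ) • 1 - Aᴴ * A).PosSemidef := by
    apply smul_one_sub_psd hH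
    intro i
    rw [hr2]
    exact le_eigDesc_zero hn hH i
  -- Hermitian parts
  have hprod : (1 - Aᴴ) * (1 - A) = (1 - A)ᴴ * (1 - A) := by
    rw [Matrix.conjTranspose_sub, Matrix.conjTranspose_one]
  have hherm1 : ((1 : Matrix (Fin n) (Fin n) ℂ) - Aᴴ * A).IsHermitian :=
    Matrix.isHermitian_one.sub hH
  have hherm2 : ((1 - Aᴴ) * (1 - A)).IsHermitian := by
    rw [hprod]; exact (Matrix.posSemidef_conjTranspose_mul_self (1 - A)).isHermitian
  have hsmulherm : ∀ c : ℝ, ((c : ℂ) • ((1 - Aᴴ) * (1 - A))).IsHermitian := by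
    intro c
    unfold Matrix.IsHermitian
    rw [Matrix.conjTranspose_smul, hherm2.eq, Complex.star_def, Complex.conj_ofReal]
  -- quadratic form facts, for every vector x
  have main : ∀ x : Fin n → ℂ,
      (0 : ℂ) ≤ star x ⬝ᵥ (((1 - Aᴴ * A) -
          (((1 - r) / (1 + r) : ℝ) : ℂ) • ((1 - Aᴴ) * (1 - A))) *ᵥ x) ∧
      (0 : ℂ) ≤ star x ⬝ᵥ (((((1 + r) / (1 - r) : ℝ) : ℂ) • ((1 - Aᴴ) * (1 - A))
          - (1 - Aᴴ * A)) *ᵥ x) := by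
    intro x
    set xE : EuclideanSpace ℂ (Fin n) := (WithLp.equiv 2 _).symm x with hxE
    set yE : EuclideanSpace ℂ (Fin n) := (WithLp.equiv 2 _).symm (A *ᵥ x) with hyE
    set u : ℝ := ‖xE‖ with hu
    set s : ℝ := ‖yE‖ with hs
    have hu0 : 0 ≤ u := norm_nonneg _
    have hs0 : 0 ≤ s := norm_nonneg _
    have ha : star x ⬝ᵥ x = ((u ^ 2 : ℝ) : ℂ) := by
      rw [dotProduct_comm, ← EuclideanSpace.inner_toLp_toLp, hu]
      push_cast
      exact inner_self_eq_norm_sq_to_K (𝕜 := ℂ) xE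
    have hd : star (A *ᵥ x) ⬝ᵥ (A *ᵥ x) = ((s ^ 2 : ℝ) : ℂ) := by
      rw [dotProduct_comm, ← EuclideanSpace.inner_toLp_toLp, hs]
      push_cast
      exact inner_self_eq_norm_sq_to_K (𝕜 := ℂ) yE
    set b : ℂ := star x ⬝ᵥ (A *ᵥ x) with hb
    set t : ℝ := b.re with htdef
    have hbnorm : ‖b‖ ≤ u * s := by
      have : b = inner ℂ xE yE := by rw [hb, dotProduct_comm]; rfl
      rw [this]
      exact norm_inner_le_norm xE yE
    have ht : |t| ≤ u * s := le_trans (Complex.abs_re_le_norm b) hbnorm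
    -- conjugate relation
    have hAh : ∀ y : Fin n → ℂ, star x ⬝ᵥ (Aᴴ *ᵥ y) = star (A *ᵥ x) ⬝ᵥ y := by
      intro y
      rw [Matrix.dotProduct_mulVec, ← Matrix.star_mulVec]
    have hb' : star (A *ᵥ x) ⬝ᵥ x = (starRingEnd ℂ) b := by
      rw [hb]
      simp [dotProduct, map_sum, mul_comm]
    -- operator norm bound: s ≤ r * u
    have hq := hpsd.re_dotProduct_nonneg x
    have hexp : star x ⬝ᵥ ((((r ^ 2 : ℝ) : ℂ) • 1 - Aᴴ * A) *ᵥ x)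
        = ((r ^ 2 : ℝ) : ℂ) * ((u ^ 2 : ℝ) : ℂ) - ((s ^ 2 : ℝ) : ℂ) := by
      rw [Matrix.sub_mulVec, Matrix.smul_mulVec, Matrix.one_mulVec,
        dotProduct_sub, dotProduct_smul, ← Matrix.mulVec_mulVec,
        hAh (A *ᵥ x), ha, hd]
      simp
    rw [hexp] at hq
    have hs2 : s ^ 2 ≤ r ^ 2 * u ^ 2 := by
      simp only [RCLike.re_to_complex, ← Complex.ofReal_pow, ← Complex.ofReal_mul,
        ← Complex.ofReal_sub, Complex.ofReal_re, sub_nonneg] at hq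
      exact hq
    have hsu : s ≤ r * u := by nlinarith [mul_nonneg hr0 hu0]
    -- expand the two quadratic forms
    have hexpand : (1 - Aᴴ) * (1 - A) = 1 - A - Aᴴ + Aᴴ * A := by noncomm_ring
    have hP : star x ⬝ᵥ (((1 - Aᴴ) * (1 - A)) *ᵥ x) = ((u ^ 2 - 2 * t + s ^ 2 : ℝ) : ℂ) := by
      rw [hexpand, Matrix.add_mulVec, Matrix.sub_mulVec, Matrix.sub_mulVec,
        Matrix.one_mulVec, ← Matrix.mulVec_mulVec, dotProduct_add,
        dotProduct_sub, dotProduct_sub, ha, ← hb, hAh, hb', hAh, hd]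
      rw [sub_sub, Complex.add_conj, htdef]
      push_cast
      ring
    have hT : star x ⬝ᵥ (((1 : Matrix (Fin n) (Fin n) ℂ) - Aᴴ * A) *ᵥ x)
        = ((u ^ 2 - s ^ 2 : ℝ) : ℂ) := by
      rw [Matrix.sub_mulVec, Matrix.one_mulVec, ← Matrix.mulVec_mulVec,
        dotProduct_sub, ha, hAh, hd]
      push_cast
      ring
    constructor
    · rw [Matrix.sub_mulVec, Matrix.smul_mulVec, dotProduct_sub,
        dotProduct_smul, hT, hP, smul_eq_mul, ← Complex.ofReal_mul,
        ← Complex.ofReal_sub, Complex.zero_le_real]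
      exact key1 r s u t hr0 hr1 hs0 hu0 hsu ht
    · rw [Matrix.sub_mulVec, Matrix.smul_mulVec, dotProduct_sub,
        dotProduct_smul, hT, hP, smul_eq_mul, ← Complex.ofReal_mul,
        ← Complex.ofReal_sub, Complex.zero_le_real]
      exact key2 r s u t hr0 hr1 hs0 hu0 hsu ht
  exact ⟨Matrix.PosSemidef.of_dotProduct_mulVec_nonneg (hherm1.sub (hsmulherm _)) fun x => (main x).1,
    Matrix.PosSemidef.of_dotProduct_mulVec_nonneg ((hsmulherm _).sub hherm1) fun x => (main x).2⟩
end

section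
/- Let A be an n×n strict contraction with singular values r_1 ≥ … ≥ r_n. Then for each j = 1,…,n, λ_j((I−A*)⁻¹(I−A*A)(I−A)⁻¹) ≥ (1−r_{n−j+1}²)/(1+r_1)². -/
open Matrix
open scoped ComplexOrder

section Aux

open scoped InnerProductSpace

variable {n : ℕ} {Z : Matrix (Fin n) (Fin n) ℂ}

local notation "E" => EuclideanSpace ℂ (Fin n)

/-- Orthonormal eigenbasis listed so that `eigBasis hZ i` has eigenvalue `eigDesc hZ i`
(descending order). -/
noncomputable def eigBasis (hZ : Z.IsHermitian) : OrthonormalBasis (Fin n) ℂ E :=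
  hZ.eigenvectorBasis.reindex (Fin.revPerm.trans (Tuple.sort hZ.eigenvalues)).symm

lemma eigBasis_apply (hZ : Z.IsHermitian) (i : Fin n) :
    eigBasis hZ i = hZ.eigenvectorBasis (Tuple.sort hZ.eigenvalues i.rev) := by
  simp [eigBasis, OrthonormalBasis.reindex_apply, Equiv.symm_symm, Equiv.trans_apply]

lemma eigBasis_eigen (hZ : Z.IsHermitian) (i : Fin n) :
    Matrix.toEuclideanLin Z (eigBasis hZ i) = (eigDesc hZ i : ℂ) • eigBasis hZ i := by
  apply (WithLp.equiv 2 (Fin n → ℂ)).injective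
  ext k
  have h := congrFun (hZ.mulVec_eigenvectorBasis (Tuple.sort hZ.eigenvalues i.rev)) k
  simpa [eigBasis_apply, Matrix.toEuclideanLin_apply, eigDesc] using h

lemma eigDesc_antitone (hZ : Z.IsHermitian) : Antitone (eigDesc hZ) := by
  intro i i' h
  exact Tuple.monotone_sort hZ.eigenvalues (Fin.rev_le_rev.mpr h)

lemma inner_toEuclideanLin_eq_sum (hZ : Z.IsHermitian) (x : E) :
    ⟪x, Matrix.toEuclideanLin Z x⟫_ℂ =
      ∑ i, (eigDesc hZ i : ℂ) * ((starRingEnd ℂ) ((eigBasis hZ).repr x i) *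
        (eigBasis hZ).repr x i) := by
  set w := eigBasis hZ with hw
  have hZx : Matrix.toEuclideanLin Z x = ∑ i, ((eigDesc hZ i : ℂ) * w.repr x i) • w i := by
    conv_lhs => rw [← w.sum_repr x]
    rw [map_sum]
    refine Finset.sum_congr rfl fun i _ => ?_
    rw [LinearMap.map_smul, eigBasis_eigen hZ i, smul_smul, mul_comm, ← hw]
  rw [hZx, inner_sum]
  refine Finset.sum_congr rfl fun i _ => ?_
  rw [inner_smul_right, ← inner_conj_symm, ← w.repr_apply_apply]
  ring

lemma norm_sq_eq_sum_repr_s14 (w : OrthonormalBasis (Fin n) ℂ E) (x : E) :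
    ‖x‖ ^ 2 = ∑ i, ‖w.repr x i‖ ^ 2 := by
  rw [← w.repr.norm_map x]
  rw [EuclideanSpace.norm_eq, Real.sq_sqrt (by positivity)]

lemma re_inner_toEuclideanLin (hZ : Z.IsHermitian) (x : E) :
    RCLike.re ⟪x, Matrix.toEuclideanLin Z x⟫_ℂ =
      ∑ i, eigDesc hZ i * ‖(eigBasis hZ).repr x i‖ ^ 2 := by
  rw [inner_toEuclideanLin_eq_sum hZ x]
  rw [RCLike.re_to_complex, Complex.re_sum]
  refine Finset.sum_congr rfl fun i _ => ?_
  rw [Complex.conj_mul', ← Complex.ofReal_pow, ← Complex.ofReal_mul, Complex.ofReal_re]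

lemma repr_eq_zero_of_mem_span (w : OrthonormalBasis (Fin n) ℂ E) (s : Set (Fin n))
    {x : E} (hx : x ∈ Submodule.span ℂ (w '' s)) {i : Fin n} (hi : i ∉ s) :
    w.repr x i = 0 := by
  rw [w.repr_apply_apply]
  have hle : Submodule.span ℂ (w '' s) ≤ LinearMap.ker (innerSL ℂ (w i)).toLinearMap := by
    rw [Submodule.span_le]
    rintro _ ⟨k, hk, rfl⟩
    have hik : i ≠ k := fun h => hi (h ▸ hk)
    simpa using w.orthonormal.2 hik
  simpa using hle hx

/-- Rayleigh upper bound on the span of the eigenvectors with indices `≥ k`. -/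
lemma rayleigh_le_of_mem_span (hZ : Z.IsHermitian) (k : Fin n) {x : E}
    (hx : x ∈ Submodule.span ℂ (eigBasis hZ '' Set.Ici k)) :
    RCLike.re ⟪x, Matrix.toEuclideanLin Z x⟫_ℂ ≤ eigDesc hZ k * ‖x‖ ^ 2 := by
  rw [re_inner_toEuclideanLin hZ x, norm_sq_eq_sum_repr_s14 (eigBasis hZ) x, Finset.mul_sum]
  refine Finset.sum_le_sum fun i _ => ?_
  by_cases hi : i ∈ Set.Ici k
  · exact mul_le_mul_of_nonneg_right (eigDesc_antitone hZ hi) (by positivity)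
  · rw [repr_eq_zero_of_mem_span (eigBasis hZ) _ hx hi]
    simp

lemma finrank_span_eigBasis (w : OrthonormalBasis (Fin n) ℂ E) (s : Finset (Fin n)) :
    Module.finrank ℂ (Submodule.span ℂ (w '' (s : Set (Fin n)))) = s.card := by
  have li : LinearIndependent ℂ (fun i : (s : Set (Fin n)) => w (i : Fin n)) :=
    w.orthonormal.linearIndependent.comp _ Subtype.val_injective
  have h := finrank_span_eq_card li
  have hr : Set.range (fun i : (s : Set (Fin n)) => w (i : Fin n))
      = w '' (s : Set (Fin n)) := (Set.image_eq_range _ _).symm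
  rw [hr] at h
  rw [h]
  simp

lemma span_eigBasis_Ici_finrank (hZ : Z.IsHermitian) (k : Fin n) :
    Module.finrank ℂ (Submodule.span ℂ (eigBasis hZ '' Set.Ici k)) = n - k := by
  have : (Set.Ici k) = ((Finset.Ici k : Finset (Fin n)) : Set (Fin n)) := by
    ext; simp
  rw [this, finrank_span_eigBasis]
  exact Fin.card_Ici k

/-- Half of Courant–Fischer: any subspace of dimension `j+1` contains a nonzero vector whose
Rayleigh quotient is at most the `j`-th descending eigenvalue. -/
lemma exists_rayleigh_le (hZ : Z.IsHermitian) (j : Fin n) (W : Submodule ℂ E)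
    (hW : Module.finrank ℂ W = j + 1) :
    ∃ x : E, x ∈ W ∧ x ≠ 0 ∧
      RCLike.re ⟪x, Matrix.toEuclideanLin Z x⟫_ℂ ≤ eigDesc hZ j * ‖x‖ ^ 2 := by
  set T := Submodule.span ℂ (eigBasis hZ '' Set.Ici j) with hT
  have hTrank : Module.finrank ℂ T = n - j := span_eigBasis_Ici_finrank hZ j
  have hsum := Submodule.finrank_sup_add_finrank_inf_eq W T
  have hle : Module.finrank ℂ (W ⊔ T : Submodule ℂ E) ≤ n := by
    simpa [finrank_euclideanSpace] using Submodule.finrank_le (W ⊔ T)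
  have hpos : 0 < Module.finrank ℂ (W ⊓ T : Submodule ℂ E) := by
    have hj := j.isLt
    omega
  have hne : (W ⊓ T : Submodule ℂ E) ≠ ⊥ := by
    intro h
    rw [h, finrank_bot] at hpos
    exact lt_irrefl 0 hpos
  obtain ⟨x, hxmem, hx0⟩ := Submodule.exists_mem_ne_zero_of_ne_bot hne
  exact ⟨x, hxmem.1, hx0, rayleigh_le_of_mem_span hZ j hxmem.2⟩

lemma toEuclideanLin_mul_apply (P Q : Matrix (Fin n) (Fin n) ℂ) (x : E) :
    Matrix.toEuclideanLin (P * Q) x = Matrix.toEuclideanLin P (Matrix.toEuclideanLin Q x) := by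
  simp [Matrix.toEuclideanLin_apply, Matrix.mulVec_mulVec]

end Aux

open scoped InnerProductSpace in
set_option maxHeartbeats 1000000 in
theorem stmt14 {n : ℕ} (A : Matrix (Fin n) (Fin n) ℂ) (hA : ∀ j, singVal A j < 1)
    (hM : ((1 - Aᴴ)⁻¹ * (1 - Aᴴ * A) * (1 - A)⁻¹).IsHermitian) (j : Fin n) :
    eigDesc hM j ≥ (1 - singVal A j.rev ^ 2) / (1 + singVal A ⟨0, j.pos⟩) ^ 2 := by
  classical
  have hG : (Aᴴ * A).IsHermitian := (Matrix.posSemidef_conjTranspose_mul_self A).isHermitian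
  have hsv : ∀ k, singVal A k ^ 2 = eigDesc hG k := by
    intro k
    have h0 : 0 ≤ eigDesc hG k :=
      (Matrix.posSemidef_conjTranspose_mul_self A).eigenvalues_nonneg _
    exact Real.sq_sqrt h0
  set r1 := singVal A ⟨0, j.pos⟩ with hr1def
  have hr1nn : 0 ≤ r1 := Real.sqrt_nonneg _
  have hr1lt : r1 < 1 := hA _
  have hrjnn : 0 ≤ singVal A j.rev := Real.sqrt_nonneg _
  have hrjlt : singVal A j.rev < 1 := hA _
  -- operator norm bound on A
  have hAle : ∀ y : EuclideanSpace ℂ (Fin n),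
      ‖Matrix.toEuclideanLin A y‖ ≤ r1 * ‖y‖ := by
    intro y
    have htop : y ∈ Submodule.span ℂ (eigBasis hG '' Set.Ici (⟨0, j.pos⟩ : Fin n)) := by
      have h1 : Set.Ici (⟨0, j.pos⟩ : Fin n) = Set.univ := by
        ext i
        simp [Fin.le_def]
      rw [h1, Set.image_univ]
      have hsp : Submodule.span ℂ (Set.range (eigBasis hG)) = ⊤ := by
        rw [← (eigBasis hG).coe_toBasis]
        exact Module.Basis.span_eq _
      rw [hsp]
      trivial
    have hray := rayleigh_le_of_mem_span hG ⟨0, j.pos⟩ htop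
    have hid : RCLike.re ⟪y, Matrix.toEuclideanLin (Aᴴ * A) y⟫_ℂ
        = ‖Matrix.toEuclideanLin A y‖ ^ 2 := by
      rw [toEuclideanLin_mul_apply, Matrix.toEuclideanLin_conjTranspose_eq_adjoint,
        LinearMap.adjoint_inner_right]
      exact inner_self_eq_norm_sq _
    have h2 : ‖Matrix.toEuclideanLin A y‖ ^ 2 ≤ (r1 * ‖y‖) ^ 2 := by
      rw [mul_pow, hsv]
      rw [hid] at hray
      exact hray
    exact le_of_pow_le_pow_left₀ two_ne_zero (by positivity) h2
  -- `1 - A` acts as `y - A y`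
  have hsub : ∀ y : EuclideanSpace ℂ (Fin n),
      Matrix.toEuclideanLin (1 - A) y = y - Matrix.toEuclideanLin A y := by
    intro y
    apply (WithLp.equiv 2 (Fin n → ℂ)).injective
    simp [Matrix.sub_mulVec, Matrix.one_mulVec]
  have hker : ∀ y : EuclideanSpace ℂ (Fin n), Matrix.toEuclideanLin (1 - A) y = 0 → y = 0 := by
    intro y hy
    rw [hsub y, sub_eq_zero] at hy
    by_contra hy0
    have h1 : ‖y‖ = ‖Matrix.toEuclideanLin A y‖ := by rw [← hy]
    have h2 := hAle y
    have h3 : 0 < ‖y‖ := norm_pos_iff.mpr hy0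
    nlinarith
  have hdet : IsUnit (1 - A).det := by
    rw [isUnit_iff_ne_zero]
    intro h0
    obtain ⟨v, hv, hv0⟩ := Matrix.exists_mulVec_eq_zero_iff.mpr h0
    have hy : Matrix.toEuclideanLin (1 - A) ((WithLp.equiv 2 (Fin n → ℂ)).symm v) = 0 := by
      rw [WithLp.equiv_symm_apply, Matrix.toEuclideanLin_apply_piLp_toLp, hv0]
      simp
    have := hker _ hy
    apply hv
    have h2 := congrArg (WithLp.equiv 2 (Fin n → ℂ)) this
    simpa using h2
  have hinv1 : (1 - A)⁻¹ * (1 - A) = 1 := Matrix.nonsing_inv_mul _ hdet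
  have hct : (1 - Aᴴ)⁻¹ = ((1 - A)⁻¹)ᴴ := by
    rw [Matrix.conjTranspose_nonsing_inv, Matrix.conjTranspose_sub, Matrix.conjTranspose_one]
  have hfinj : Function.Injective (Matrix.toEuclideanLin (1 - A)) := by
    rw [← LinearMap.ker_eq_bot]
    rw [eq_bot_iff]
    intro y hy
    exact hker y (LinearMap.mem_ker.mp hy)
  -- the subspace
  have hSrank : Module.finrank ℂ
      (Submodule.span ℂ (eigBasis hG '' Set.Ici j.rev)) = (j : ℕ) + 1 := by
    rw [span_eigBasis_Ici_finrank, Fin.val_rev]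
    have := j.isLt
    omega
  have hWrank : Module.finrank ℂ
      ((Submodule.span ℂ (eigBasis hG '' Set.Ici j.rev)).map
        (Matrix.toEuclideanLin (1 - A))) = (j : ℕ) + 1 := by
    rw [← hSrank]
    exact (Submodule.equivMapOfInjective _ hfinj _).finrank_eq.symm
  obtain ⟨x, hxW, hx0, hxray⟩ := exists_rayleigh_le hM j _ hWrank
  obtain ⟨y, hyS, rfl⟩ := Submodule.mem_map.mp hxW
  have hy0 : y ≠ 0 := by
    intro h
    exact hx0 (by rw [h, map_zero])
  have hone : ∀ z : EuclideanSpace ℂ (Fin n),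
      Matrix.toEuclideanLin (1 : Matrix (Fin n) (Fin n) ℂ) z = z := by
    intro z
    apply (WithLp.equiv 2 (Fin n → ℂ)).injective
    simp [Matrix.one_mulVec]
  have hback : Matrix.toEuclideanLin (1 - A)⁻¹ (Matrix.toEuclideanLin (1 - A) y) = y := by
    rw [← toEuclideanLin_mul_apply, hinv1, hone]
  have hinner : RCLike.re ⟪Matrix.toEuclideanLin (1 - A) y,
      Matrix.toEuclideanLin ((1 - Aᴴ)⁻¹ * (1 - Aᴴ * A) * (1 - A)⁻¹)
        (Matrix.toEuclideanLin (1 - A) y)⟫_ℂ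
      = ‖y‖ ^ 2 - RCLike.re ⟪y, Matrix.toEuclideanLin (Aᴴ * A) y⟫_ℂ := by
    have hMfy : Matrix.toEuclideanLin ((1 - Aᴴ)⁻¹ * (1 - Aᴴ * A) * (1 - A)⁻¹)
        (Matrix.toEuclideanLin (1 - A) y)
        = Matrix.toEuclideanLin ((1 - Aᴴ)⁻¹ * (1 - Aᴴ * A)) y := by
      rw [← toEuclideanLin_mul_apply, mul_assoc, mul_assoc, hinv1, mul_one]
    rw [hMfy, toEuclideanLin_mul_apply, hct, Matrix.toEuclideanLin_conjTranspose_eq_adjoint,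
      LinearMap.adjoint_inner_right, hback]
    rw [map_sub, LinearMap.sub_apply, inner_sub_right, hone]
    rw [map_sub]
    rw [inner_self_eq_norm_sq]
  have hGray := rayleigh_le_of_mem_span hG j.rev hyS
  have hfy : ‖Matrix.toEuclideanLin (1 - A) y‖ ≤ (1 + r1) * ‖y‖ := by
    rw [hsub y]
    calc ‖y - Matrix.toEuclideanLin A y‖ ≤ ‖y‖ + ‖Matrix.toEuclideanLin A y‖ := norm_sub_le _ _
    _ ≤ ‖y‖ + r1 * ‖y‖ := by linarith [hAle y]
    _ = (1 + r1) * ‖y‖ := by ring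
  -- final arithmetic
  have hxpos : 0 < ‖Matrix.toEuclideanLin (1 - A) y‖ ^ 2 := by
    have := norm_pos_iff.mpr hx0
    positivity
  have hypos : 0 < ‖y‖ ^ 2 := by
    have := norm_pos_iff.mpr hy0
    positivity
  have hcpos : 0 < 1 - singVal A j.rev ^ 2 := by nlinarith
  have hdpos : 0 < (1 + r1) ^ 2 := by positivity
  have hN : ‖Matrix.toEuclideanLin (1 - A) y‖ ^ 2 ≤ (1 + r1) ^ 2 * ‖y‖ ^ 2 := by
    have h2 := pow_le_pow_left₀ (norm_nonneg _) hfy 2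
    rwa [mul_pow] at h2
  have hchain : (1 - singVal A j.rev ^ 2) * ‖y‖ ^ 2
      ≤ eigDesc hM j * ‖Matrix.toEuclideanLin (1 - A) y‖ ^ 2 := by
    refine le_trans ?_ hxray
    rw [hinner]
    rw [← hsv j.rev] at hGray
    linarith
  rw [ge_iff_le, div_le_iff₀ hdpos]
  generalize hc : (1 : ℝ) - singVal A j.rev ^ 2 = c at hchain hcpos ⊢
  generalize he : eigDesc hM j = e at hchain ⊢
  generalize hNg : ‖Matrix.toEuclideanLin (1 - A) y‖ ^ 2 = N at hchain hN hxpos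
  generalize hYg : ‖y‖ ^ 2 = Y at hchain hN hypos
  generalize hdg : (1 + r1) ^ 2 = d at hN hdpos ⊢
  nlinarith [mul_le_mul_of_nonneg_left hN hcpos.le, mul_le_mul_of_nonneg_left hchain hdpos.le,
    hxpos]
end

section
/- Let A be a normal n×n strict contraction. Then for each j = 1,…,n, λ_j(Re((I−A)⁻¹)) ≥ λ_j((I+|A|)⁻¹), where |A| = (A*A)^{1/2} and Re(X) = (X+X*)/2. -/
open Matrix
open scoped ComplexOrder
open Polynomial

/-- The positive semidefinite square root `Matrix.PosSemidef.sqrt` of the older Mathlib,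
spelled out with its old definition (removed from Mathlib). -/
noncomputable def PosSemidef.oldSqrt {n : ℕ} {A : Matrix (Fin n) (Fin n) ℂ} (hA : A.PosSemidef) :
    Matrix (Fin n) (Fin n) ℂ :=
  (hA.isHermitian.eigenvectorUnitary : Matrix (Fin n) (Fin n) ℂ) *
    diagonal ((↑) ∘ (√·) ∘ hA.isHermitian.eigenvalues) *
    (star hA.isHermitian.eigenvectorUnitary : Matrix (Fin n) (Fin n) ℂ)

lemma ofFn_comp_perm_coe {n : ℕ} (f : Fin n → ℝ) (σ : Equiv.Perm (Fin n)) :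
    ((List.ofFn (f ∘ σ)) : Multiset ℝ) = Multiset.map f Finset.univ.val := by
  rw [← Fin.univ_val_map]
  have huniv : Finset.univ.val.map σ = Finset.univ.val := by
    have h2 := Finset.map_univ_equiv σ
    calc Finset.univ.val.map ⇑σ = (Finset.univ.map σ.toEmbedding).val := by
          rw [Finset.map_val]; rfl
      _ = Finset.univ.val := by rw [h2]
  calc Multiset.map (f ∘ ⇑σ) Finset.univ.val
      = Multiset.map f (Multiset.map ⇑σ Finset.univ.val) := (Multiset.map_map f ⇑σ _).symm
    _ = Multiset.map f Finset.univ.val := by rw [huniv]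

lemma sort_comp_eq_of_multiset_eq {n : ℕ} {v w : Fin n → ℝ}
    (h : Multiset.map v Finset.univ.val = Multiset.map w Finset.univ.val) :
    v ∘ Tuple.sort v = w ∘ Tuple.sort w := by
  have hperm : List.Perm (List.ofFn (v ∘ Tuple.sort v)) (List.ofFn (w ∘ Tuple.sort w)) := by
    rw [← Multiset.coe_eq_coe, ofFn_comp_perm_coe, ofFn_comp_perm_coe, h]
  have hs1 : List.Pairwise (· ≤ ·) (List.ofFn (v ∘ Tuple.sort v)) := by
    rw [List.pairwise_ofFn]
    exact fun i j hij => Tuple.monotone_sort v hij.le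
  have hs2 : List.Pairwise (· ≤ ·) (List.ofFn (w ∘ Tuple.sort w)) := by
    rw [List.pairwise_ofFn]
    exact fun i j hij => Tuple.monotone_sort w hij.le
  have heq := List.Perm.eq_of_pairwise' hs1 hs2 hperm
  funext i
  have h3 := List.get_of_eq heq (Fin.cast (by simp) i)
  simpa using h3

lemma sort_comp_le_of_le {n : ℕ} {v w : Fin n → ℝ} (h : ∀ i, v i ≤ w i) (k : Fin n) :
    (v ∘ Tuple.sort v) k ≤ (w ∘ Tuple.sort w) k := by
  classical
  set S : Finset (Fin n) := Finset.image (Tuple.sort v) (Finset.Ici k) with hS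
  set T : Finset (Fin n) := Finset.image (Tuple.sort w) (Finset.Iic k) with hT
  have hScard : S.card = n - k.val := by
    rw [hS, Finset.card_image_of_injective _ (Tuple.sort v).injective, Fin.card_Ici]
  have hTcard : T.card = k.val + 1 := by
    rw [hT, Finset.card_image_of_injective _ (Tuple.sort w).injective, Fin.card_Iic]
  have hinter : (S ∩ T).Nonempty := by
    by_contra hcon
    rw [Finset.not_nonempty_iff_eq_empty] at hcon
    have hdisj := Finset.card_union_of_disjoint (Finset.disjoint_iff_inter_eq_empty.mpr hcon)
    have hle := Finset.card_le_univ (S ∪ T)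
    have hk := k.isLt
    simp only [hdisj, hScard, hTcard, Finset.card_univ, Fintype.card_fin] at hle
    omega
  obtain ⟨i, hi⟩ := hinter
  rw [Finset.mem_inter] at hi
  obtain ⟨m, hm, hmi⟩ := Finset.mem_image.mp hi.1
  obtain ⟨l, hl, hli⟩ := Finset.mem_image.mp hi.2
  have c1 : (v ∘ Tuple.sort v) k ≤ (v ∘ Tuple.sort v) m := Tuple.monotone_sort v (Finset.mem_Ici.mp hm)
  have c2 : (w ∘ Tuple.sort w) l ≤ (w ∘ Tuple.sort w) k := Tuple.monotone_sort w (Finset.mem_Iic.mp hl)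
  have c3 : v i ≤ w i := h i
  have e1 : (v ∘ Tuple.sort v) m = v i := by simp [hmi]
  have e2 : (w ∘ Tuple.sort w) l = w i := by simp [hli]
  linarith

lemma det_conj_unitary {n : ℕ} {U : Matrix (Fin n) (Fin n) ℂ}
    (hU : U ∈ Matrix.unitaryGroup (Fin n) ℂ) (c : Fin n → ℂ) (z : ℂ) :
    det (z • (1 : Matrix (Fin n) (Fin n) ℂ) - U * diagonal c * Uᴴ) = ∏ i, (z - c i) := by
  have h1 : U * Uᴴ = 1 := by
    rw [← Matrix.star_eq_conjTranspose]
    exact (Matrix.mem_unitaryGroup_iff).mp hU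
  have key : z • (1 : Matrix (Fin n) (Fin n) ℂ) - U * diagonal c * Uᴴ
      = U * (z • (1 : Matrix (Fin n) (Fin n) ℂ) - diagonal c) * Uᴴ := by
    rw [Matrix.mul_sub, Matrix.sub_mul]
    congr 1
    rw [Matrix.mul_smul, mul_one, Matrix.smul_mul, h1]
  rw [key, det_mul, det_mul, mul_comm (det U), mul_assoc, ← det_mul, h1, det_one, mul_one]
  have h2 : z • (1 : Matrix (Fin n) (Fin n) ℂ) - diagonal c = diagonal (fun i => z - c i) := by
    ext i j
    by_cases hij : i = j <;> simp [Matrix.diagonal, hij, Matrix.one_apply]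
  rw [h2, det_diagonal]

lemma prod_X_sub_C_roots {n : ℕ} (c : Fin n → ℂ) :
    (∏ i, (X - C (c i))).roots = Multiset.map c Finset.univ.val := by
  rw [Finset.prod_eq_multiset_prod]
  have : Multiset.map (fun i => X - C (c i)) Finset.univ.val
      = Multiset.map (fun a => X - C a) (Multiset.map c Finset.univ.val) := by
    rw [Multiset.map_map]; rfl
  rw [this, Polynomial.roots_multiset_prod_X_sub_C]

lemma eig_multiset_of_unitary_conj {n : ℕ} {U : Matrix (Fin n) (Fin n) ℂ}
    (hU : U ∈ Matrix.unitaryGroup (Fin n) ℂ) (d : Fin n → ℝ) {B : Matrix (Fin n) (Fin n) ℂ}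
    (hB : B.IsHermitian)
    (hBU : B = U * diagonal (fun i => (d i : ℂ)) * Uᴴ) :
    Multiset.map hB.eigenvalues Finset.univ.val = Multiset.map d Finset.univ.val := by
  have hpq : (∏ i, (X - C ((hB.eigenvalues i : ℂ)))) = ∏ i, (X - C ((d i : ℂ))) := by
    apply Polynomial.funext
    intro z
    rw [Polynomial.eval_prod, Polynomial.eval_prod]
    simp only [Polynomial.eval_sub, Polynomial.eval_X, Polynomial.eval_C]
    have e1 : ∏ i, (z - (hB.eigenvalues i : ℂ))
        = det (z • (1 : Matrix (Fin n) (Fin n) ℂ) - B) := by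
      have hst : B = (hB.eigenvectorUnitary : Matrix (Fin n) (Fin n) ℂ) *
          diagonal (fun i => ((hB.eigenvalues i : ℝ) : ℂ)) *
          ((hB.eigenvectorUnitary : Matrix (Fin n) (Fin n) ℂ))ᴴ := by
        simpa [Matrix.star_eq_conjTranspose, Function.comp_def] using hB.spectral_theorem
      conv_rhs => rw [hst]
      rw [det_conj_unitary (hB.eigenvectorUnitary).2 _ z]
    have e2 : ∏ i, (z - (d i : ℂ))
        = det (z • (1 : Matrix (Fin n) (Fin n) ℂ) - B) := by
      rw [hBU, det_conj_unitary hU _ z]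
    rw [e1, e2]
  have hroots := congrArg Polynomial.roots hpq
  rw [prod_X_sub_C_roots, prod_X_sub_C_roots] at hroots
  have h1 : Multiset.map (fun r : ℝ => (r : ℂ)) (Multiset.map hB.eigenvalues Finset.univ.val)
      = Multiset.map (fun r : ℝ => (r : ℂ)) (Multiset.map d Finset.univ.val) := by
    rw [Multiset.map_map, Multiset.map_map]
    exact hroots
  exact Multiset.map_injective Complex.ofReal_injective h1

lemma unitary_of_eigenbasis {n : ℕ} (A : Matrix (Fin n) (Fin n) ℂ)
    (b : OrthonormalBasis (Fin n) ℂ (EuclideanSpace ℂ (Fin n))) (μ : Fin n → ℂ)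
    (hb : ∀ j, A *ᵥ ⇑(b j) = μ j • ⇑(b j)) :
    ∃ U : Matrix (Fin n) (Fin n) ℂ, U ∈ Matrix.unitaryGroup (Fin n) ℂ ∧
      A = U * diagonal μ * Uᴴ := by
  classical
  set U : Matrix (Fin n) (Fin n) ℂ :=
    (EuclideanSpace.basisFun (Fin n) ℂ).toBasis.toMatrix b.toBasis with hUdef
  have hU : U ∈ Matrix.unitaryGroup (Fin n) ℂ :=
    (EuclideanSpace.basisFun (Fin n) ℂ).toMatrix_orthonormalBasis_mem_unitary b
  have hUapp : ∀ i j, U i j = b j i := fun i j => rfl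
  have hUmul : ∀ j, U *ᵥ Pi.single j 1 = ⇑(b j) := by
    intro j
    funext i
    simp [Matrix.mulVec_single, hUapp]
  have hstar : ∀ j, (star U) *ᵥ ⇑(b j) = Pi.single j 1 := by
    intro j
    rw [← hUmul, Matrix.mulVec_mulVec]
    have : star U * U = 1 := Matrix.mem_unitaryGroup_iff'.mp hU
    rw [this, Matrix.one_mulVec]
  have key : star U * A * U = diagonal μ := by
    apply Matrix.toEuclideanLin.injective
    apply Module.Basis.ext (EuclideanSpace.basisFun (Fin n) ℂ).toBasis
    intro i
    simp only [toEuclideanLin_apply, OrthonormalBasis.coe_toBasis, EuclideanSpace.basisFun_apply,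
      PiLp.ofLp_single, ← Matrix.mulVec_mulVec, hUmul, hb, Matrix.diagonal_mulVec_single,
      Matrix.mulVec_smul, hstar, mul_one]
    apply PiLp.ext
    intro j
    simp only [PiLp.toLp_apply, Pi.smul_apply, Pi.single_apply, smul_eq_mul, mul_ite, mul_one,
      mul_zero]
  refine ⟨U, hU, ?_⟩
  have h1 : U * (star U * A * U) * star U = A := by
    have hUU : U * star U = 1 := Matrix.mem_unitaryGroup_iff.mp hU
    calc U * (star U * A * U) * star U = (U * star U) * A * (U * star U) := by
          noncomm_ring
      _ = A := by rw [hUU, Matrix.one_mul, Matrix.mul_one]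
  rw [← Matrix.star_eq_conjTranspose, ← h1, key]

lemma toEuclideanLin_comp {n : ℕ} (M N : Matrix (Fin n) (Fin n) ℂ) :
    Matrix.toEuclideanLin M ∘ₗ Matrix.toEuclideanLin N = Matrix.toEuclideanLin (M * N) := by
  ext x
  simp [Matrix.toEuclideanLin_apply, Matrix.mulVec_mulVec]

set_option maxHeartbeats 1000000 in
lemma normal_eigenbasis {n : ℕ} (A : Matrix (Fin n) (Fin n) ℂ) (hN : Aᴴ * A = A * Aᴴ) :
    ∃ (b : OrthonormalBasis (Fin n) ℂ (EuclideanSpace ℂ (Fin n))) (μ : Fin n → ℂ),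
      ∀ j, Matrix.toEuclideanLin A (b j) = μ j • (b j) := by
  classical
  set H : Matrix (Fin n) (Fin n) ℂ := (1/2 : ℂ) • (A + Aᴴ) with hHdef
  set K : Matrix (Fin n) (Fin n) ℂ := (-(1/2) * Complex.I : ℂ) • (A - Aᴴ) with hKdef
  have hH : H.IsHermitian := by
    unfold Matrix.IsHermitian
    rw [hHdef, Matrix.conjTranspose_smul, Matrix.conjTranspose_add,
      Matrix.conjTranspose_conjTranspose]
    have : star ((1:ℂ)/2) = (1:ℂ)/2 := by
      simp [Complex.star_def, Complex.ext_iff]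
    rw [this, add_comm]
  have hK : K.IsHermitian := by
    unfold Matrix.IsHermitian
    rw [hKdef, Matrix.conjTranspose_smul, Matrix.conjTranspose_sub,
      Matrix.conjTranspose_conjTranspose]
    have : star (-(1/2) * Complex.I) = (1/2) * Complex.I := by
      simp [Complex.star_def, Complex.ext_iff]
    rw [this]
    match_scalars <;> ring
  have hA' : H + Complex.I • K = A := by
    rw [hHdef, hKdef]
    match_scalars
    · ring_nf
      rw [Complex.I_sq]
      norm_num
    · ring_nf
      rw [Complex.I_sq]
      norm_num
  have key : (A + Aᴴ) * (A - Aᴴ) = (A - Aᴴ) * (A + Aᴴ) := by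
    rw [add_mul, mul_sub, mul_sub, sub_mul, mul_add, mul_add, hN]
    abel
  have hHK : H * K = K * H := by
    rw [hHdef, hKdef, smul_mul_assoc, mul_smul_comm, smul_smul, smul_mul_assoc, mul_smul_comm,
      smul_smul, key, mul_comm ((1:ℂ)/2)]
  set TH := Matrix.toEuclideanLin H with hTHdef
  set TK := Matrix.toEuclideanLin K with hTKdef
  have hTH : TH.IsSymmetric := Matrix.isHermitian_iff_isSymmetric.mp hH
  have hTK : TK.IsSymmetric := Matrix.isHermitian_iff_isSymmetric.mp hK
  have hC : Commute TH TK := by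
    unfold Commute SemiconjBy
    have e1 : TH * TK = Matrix.toEuclideanLin (H * K) := by
      rw [hTHdef, hTKdef, Module.End.mul_eq_comp, toEuclideanLin_comp]
    have e2 : TK * TH = Matrix.toEuclideanLin (K * H) := by
      rw [hTHdef, hTKdef, Module.End.mul_eq_comp, toEuclideanLin_comp]
    rw [e1, e2, hHK]
  have hint := LinearMap.IsSymmetric.directSum_isInternal_of_commute hTH hTK hC
  have hofam := LinearMap.IsSymmetric.orthogonalFamily_eigenspace_inf_eigenspace hTH hTK
  have hindep := hint.submodule_iSupIndep
  haveI : Fintype {i : ℂ × ℂ //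
      (Module.End.eigenspace TH i.2 ⊓ Module.End.eigenspace TK i.1) ≠ ⊥} :=
    hindep.fintypeNeBotOfFiniteDimensional
  have hsup : (⨆ i : {i : ℂ × ℂ //
      (Module.End.eigenspace TH i.2 ⊓ Module.End.eigenspace TK i.1) ≠ ⊥},
      (Module.End.eigenspace TH (i : ℂ × ℂ).2 ⊓ Module.End.eigenspace TK (i : ℂ × ℂ).1)) = ⊤ := by
    rw [iSup_ne_bot_subtype]
    exact hint.submodule_iSup_eq_top
  have hindep' := hindep.comp (Subtype.val_injective (p := fun i : ℂ × ℂ =>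
      (Module.End.eigenspace TH i.2 ⊓ Module.End.eigenspace TK i.1) ≠ ⊥))
  have hint' := DirectSum.isInternal_submodule_of_iSupIndep_of_iSup_eq_top hindep' hsup
  have hofam' := hofam.comp (Subtype.val_injective (p := fun i : ℂ × ℂ =>
      (Module.End.eigenspace TH i.2 ⊓ Module.End.eigenspace TK i.1) ≠ ⊥))
  have hrank : Module.finrank ℂ (EuclideanSpace ℂ (Fin n)) = n := finrank_euclideanSpace_fin
  set b := hint'.subordinateOrthonormalBasis hrank hofam' with hbdef
  set idx : Fin n → ℂ × ℂ :=
    fun a => (hint'.subordinateOrthonormalBasisIndex hrank a hofam').val with hidxdef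
  have hbmem : ∀ a : Fin n, b a ∈
      (Module.End.eigenspace TH (idx a).2 ⊓ Module.End.eigenspace TK (idx a).1) :=
    fun a => hint'.subordinateOrthonormalBasis_subordinate hrank a hofam'
  refine ⟨b, fun a => (idx a).2 + Complex.I * (idx a).1, fun a => ?_⟩
  obtain ⟨h1, h2⟩ := Submodule.mem_inf.mp (hbmem a)
  rw [Module.End.mem_eigenspace_iff] at h1 h2
  have hTA : Matrix.toEuclideanLin A = TH + Complex.I • TK := by
    rw [hTHdef, hTKdef, ← hA']
    simp [map_add]
  rw [hTA]
  simp only [LinearMap.add_apply, LinearMap.smul_apply, h1, h2, smul_smul, add_smul]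

lemma normal_mulVec {n : ℕ} (A : Matrix (Fin n) (Fin n) ℂ)
    (b : OrthonormalBasis (Fin n) ℂ (EuclideanSpace ℂ (Fin n))) (μ : Fin n → ℂ)
    (hb : ∀ j, Matrix.toEuclideanLin A (b j) = μ j • (b j)) (j : Fin n) :
    A *ᵥ ⇑(b j) = μ j • ⇑(b j) := by
  have h := hb j
  rw [Matrix.toEuclideanLin_apply] at h
  simpa using congr(⇑$(h))

lemma normal_spectral {n : ℕ} (A : Matrix (Fin n) (Fin n) ℂ) (hN : Aᴴ * A = A * Aᴴ) :
    ∃ U : Matrix (Fin n) (Fin n) ℂ, U ∈ Matrix.unitaryGroup (Fin n) ℂ ∧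
      ∃ μ : Fin n → ℂ, A = U * diagonal μ * Uᴴ := by
  obtain ⟨b, μ, hb⟩ := normal_eigenbasis A hN
  obtain ⟨U, hU, hAU⟩ := unitary_of_eigenbasis A b μ (normal_mulVec A b μ hb)
  exact ⟨U, hU, μ, hAU⟩

lemma eigDesc_eq_sort {n : ℕ} {U : Matrix (Fin n) (Fin n) ℂ}
    (hU : U ∈ Matrix.unitaryGroup (Fin n) ℂ) (d : Fin n → ℝ)
    {B : Matrix (Fin n) (Fin n) ℂ} (hB : B.IsHermitian)
    (hBU : B = U * diagonal (fun i => (d i : ℂ)) * Uᴴ) (j : Fin n) :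
    eigDesc hB j = (d ∘ Tuple.sort d) j.rev := by
  unfold eigDesc
  rw [sort_comp_eq_of_multiset_eq (eig_multiset_of_unitary_conj hU d hB hBU)]

lemma eigDesc_le_eigDesc {n : ℕ} {U : Matrix (Fin n) (Fin n) ℂ}
    (hU : U ∈ Matrix.unitaryGroup (Fin n) ℂ) {d e : Fin n → ℝ}
    {B C : Matrix (Fin n) (Fin n) ℂ} (hB : B.IsHermitian) (hC : C.IsHermitian)
    (hBU : B = U * diagonal (fun i => (d i : ℂ)) * Uᴴ)
    (hCU : C = U * diagonal (fun i => (e i : ℂ)) * Uᴴ)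
    (hde : ∀ i, e i ≤ d i) (j : Fin n) :
    eigDesc hC j ≤ eigDesc hB j := by
  rw [eigDesc_eq_sort hU d hB hBU j, eigDesc_eq_sort hU e hC hCU j]
  exact sort_comp_le_of_le hde j.rev

-- conjugation algebra helpers
section conj
variable {n : ℕ} {U : Matrix (Fin n) (Fin n) ℂ}

lemma uconj_mul (hU : U ∈ Matrix.unitaryGroup (Fin n) ℂ) (c d : Fin n → ℂ) :
    (U * diagonal c * Uᴴ) * (U * diagonal d * Uᴴ) = U * diagonal (fun i => c i * d i) * Uᴴ := by
  have h1 : Uᴴ * U = 1 := by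
    rw [← Matrix.star_eq_conjTranspose]
    exact Matrix.mem_unitaryGroup_iff'.mp hU
  calc (U * diagonal c * Uᴴ) * (U * diagonal d * Uᴴ)
      = U * (diagonal c * (Uᴴ * U) * diagonal d) * Uᴴ := by noncomm_ring
    _ = U * diagonal (fun i => c i * d i) * Uᴴ := by
        rw [h1, Matrix.mul_one, Matrix.diagonal_mul_diagonal]

lemma uconj_one (hU : U ∈ Matrix.unitaryGroup (Fin n) ℂ) : U * diagonal (fun _ : Fin n => (1:ℂ)) * Uᴴ = 1 := by
  have h1 : U * Uᴴ = 1 := by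
    rw [← Matrix.star_eq_conjTranspose]
    exact Matrix.mem_unitaryGroup_iff.mp hU
  rw [Matrix.diagonal_one, Matrix.mul_one, h1]

lemma uconj_add (c d : Fin n → ℂ) :
    (U * diagonal c * Uᴴ) + (U * diagonal d * Uᴴ) = U * diagonal (fun i => c i + d i) * Uᴴ := by
  rw [← Matrix.diagonal_add]
  noncomm_ring

lemma uconj_inv (hU : U ∈ Matrix.unitaryGroup (Fin n) ℂ) {c : Fin n → ℂ} (hc : ∀ i, c i ≠ 0) :
    (U * diagonal c * Uᴴ)⁻¹ = U * diagonal (fun i => (c i)⁻¹) * Uᴴ := by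
  apply Matrix.inv_eq_right_inv
  rw [uconj_mul hU]
  have : (fun i => c i * (c i)⁻¹) = fun _ : Fin n => (1:ℂ) := by
    funext i
    exact mul_inv_cancel₀ (hc i)
  rw [this, uconj_one hU]

lemma uconj_hermPart (c : Fin n → ℂ) :
    hermPart (U * diagonal c * Uᴴ) = U * diagonal (fun i => (((c i).re : ℝ) : ℂ)) * Uᴴ := by
  unfold hermPart
  have h2 : (U * diagonal c * Uᴴ)ᴴ = U * diagonal (fun i => star (c i)) * Uᴴ := by
    rw [Matrix.conjTranspose_mul, Matrix.conjTranspose_mul, Matrix.conjTranspose_conjTranspose,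
      Matrix.diagonal_conjTranspose]
    rw [Matrix.mul_assoc]
    rfl
  rw [h2, uconj_add]
  have h3 : (fun i => (((c i).re : ℝ) : ℂ)) = fun i => (1/2 : ℂ) * (c i + star (c i)) := by
    funext i
    rw [Complex.star_def, Complex.add_conj]
    push_cast
    ring
  rw [h3]
  rw [show (fun i => (1/2 : ℂ) * (c i + star (c i))) = (1/2 : ℂ) • (fun i => c i + star (c i)) from rfl]
  rw [Matrix.diagonal_smul, Matrix.mul_smul, Matrix.smul_mul]

end conj

lemma uconj_sub {n : ℕ} {U : Matrix (Fin n) (Fin n) ℂ} (c d : Fin n → ℂ) :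
    (U * diagonal c * Uᴴ) - (U * diagonal d * Uᴴ) = U * diagonal (fun i => c i - d i) * Uᴴ := by
  rw [← Matrix.diagonal_sub]
  noncomm_ring

theorem stmt15 {n : ℕ} (A : Matrix (Fin n) (Fin n) ℂ) (hN : Aᴴ * A = A * Aᴴ)
    (hA : ∀ j, singVal A j < 1)
    (hI : ((1 + PosSemidef.oldSqrt (Matrix.posSemidef_conjTranspose_mul_self A))⁻¹).IsHermitian)
    (j : Fin n) :
    eigDesc (hermPart_isHermitian (1 - A)⁻¹) j ≥ eigDesc hI j := by
  obtain ⟨U, hU, μ, hAU⟩ := normal_spectral A hN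
  have hAH : Aᴴ = U * diagonal (fun i => star (μ i)) * Uᴴ := by
    rw [hAU, Matrix.conjTranspose_mul, Matrix.conjTranspose_mul,
      Matrix.conjTranspose_conjTranspose, Matrix.diagonal_conjTranspose, Matrix.mul_assoc]
    rfl
  have hAA : Aᴴ * A = U * diagonal (fun i => ((‖μ i‖ ^ 2 : ℝ) : ℂ)) * Uᴴ := by
    rw [hAH]
    conv_lhs => rw [hAU]
    rw [uconj_mul hU]
    have hfun : (fun i => star (μ i) * μ i) = fun i => ((‖μ i‖ ^ 2 : ℝ) : ℂ) := by
      funext i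
      rw [Complex.star_def, mul_comm, Complex.mul_conj, Complex.normSq_eq_norm_sq]
    rw [hfun]
  have habs : ∀ i, ‖μ i‖ < 1 := by
    have hmul := eig_multiset_of_unitary_conj hU (fun i => ‖μ i‖ ^ 2)
      (Matrix.posSemidef_conjTranspose_mul_self A).isHermitian hAA
    have hsort := sort_comp_eq_of_multiset_eq hmul
    intro i
    set w : Fin n → ℝ := fun i => ‖μ i‖ ^ 2 with hwdef
    have hj := hA (Fin.rev ((Tuple.sort w).symm i))
    unfold singVal eigDesc at hj
    rw [Fin.rev_rev] at hj
    rw [congrFun hsort ((Tuple.sort w).symm i)] at hj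
    simp only [Function.comp_apply, Equiv.apply_symm_apply] at hj
    rw [hwdef] at hj
    rwa [Real.sqrt_sq (norm_nonneg _)] at hj
  have hmulAA := eig_multiset_of_unitary_conj hU (fun i => ‖μ i‖ ^ 2)
    (Matrix.posSemidef_conjTranspose_mul_self A).isHermitian hAA
  set hP := Matrix.posSemidef_conjTranspose_mul_self A with hPdef
  set V : Matrix (Fin n) (Fin n) ℂ := (hP.isHermitian.eigenvectorUnitary : Matrix (Fin n) (Fin n) ℂ)
    with hVdef
  set ev := hP.isHermitian.eigenvalues with hevdef
  have hV : V ∈ Matrix.unitaryGroup (Fin n) ℂ := hP.isHermitian.eigenvectorUnitary.2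
  have hsqrt : PosSemidef.oldSqrt hP
      = V * diagonal (fun i => ((Real.sqrt (ev i) : ℝ) : ℂ)) * Vᴴ := rfl
  have h1s : 1 + PosSemidef.oldSqrt hP
      = V * diagonal (fun i => ((1 + Real.sqrt (ev i) : ℝ) : ℂ)) * Vᴴ := by
    rw [hsqrt]
    conv_lhs => rw [← uconj_one hV]
    rw [uconj_add]
    congr 2
    funext i
    push_cast
    ring
  have hinvC : (1 + PosSemidef.oldSqrt hP)⁻¹
      = V * diagonal (fun i => (((1 + Real.sqrt (ev i))⁻¹ : ℝ) : ℂ)) * Vᴴ := by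
    rw [h1s, uconj_inv hV]
    · congr 2
      funext i
      push_cast
      ring
    · intro i
      simp only [ne_eq, Complex.ofReal_eq_zero]
      positivity
  have h1mA : 1 - A = U * diagonal (fun i => 1 - μ i) * Uᴴ := by
    rw [hAU]
    conv_lhs => rw [← uconj_one hU]
    rw [uconj_sub]
  have hnz : ∀ i, 1 - μ i ≠ 0 := by
    intro i h
    rw [sub_eq_zero] at h
    have := habs i
    rw [← h] at this
    simp at this
  have hinvA : (1 - A)⁻¹ = U * diagonal (fun i => (1 - μ i)⁻¹) * Uᴴ := by
    rw [h1mA, uconj_inv hU hnz]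
  have hherm : hermPart ((1 - A)⁻¹)
      = U * diagonal (fun i => ((((1 - μ i)⁻¹).re : ℝ) : ℂ)) * Uᴴ := by
    rw [hinvA, uconj_hermPart]
  have hpt : ∀ i, (1 + ‖μ i‖)⁻¹ ≤ ((1 - μ i)⁻¹).re := by
    intro i
    set z := μ i with hz
    set r := ‖z‖ with hr
    have hx : |z.re| ≤ r := Complex.abs_re_le_norm z
    have hr1 : r < 1 := habs i
    have hr0 : 0 ≤ r := norm_nonneg z
    have hns : Complex.normSq (1 - z) = 1 - 2 * z.re + r ^ 2 := by
      rw [Complex.normSq_apply]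
      have : r ^ 2 = z.re ^ 2 + z.im ^ 2 := by
        rw [hr, Complex.sq_norm, Complex.normSq_apply]; ring
      simp only [Complex.sub_re, Complex.sub_im, Complex.one_re, Complex.one_im]
      nlinarith [this]
    have hnspos : 0 < Complex.normSq (1 - z) :=
      Complex.normSq_pos.mpr (hnz i)
    rw [Complex.inv_re, Complex.sub_re, Complex.one_re]
    rw [inv_eq_one_div, div_le_div_iff₀ (by linarith) hnspos]
    rw [hns]
    have hx1 := (abs_le.mp hx).1
    nlinarith [mul_nonneg (by linarith : (0:ℝ) ≤ r + z.re)
      (by linarith : (0:ℝ) ≤ 1 - r)]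
  have hmul2 : Multiset.map (fun i => (1 + Real.sqrt (ev i))⁻¹) Finset.univ.val
      = Multiset.map (fun i => (1 + ‖μ i‖)⁻¹) Finset.univ.val := by
    have := congrArg (Multiset.map (fun x : ℝ => (1 + Real.sqrt x)⁻¹)) hmulAA
    simp only [Multiset.map_map, Function.comp_def] at this
    rw [this]
    congr 1
    funext i
    rw [Real.sqrt_sq (norm_nonneg _)]
  rw [eigDesc_eq_sort hV _ hI hinvC j, sort_comp_eq_of_multiset_eq hmul2,
    eigDesc_eq_sort hU _ (hermPart_isHermitian _) hherm j]
  exact sort_comp_le_of_le hpt j.rev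
end

section
/- Let A be an n×n strict contraction with singular values σ_1(A) ≥ … ≥ σ_n(A), and let C(A) = (A−iI)(A+iI)⁻¹ be its Cayley transform. Then for each j = 1,…,n, (1−σ_{n−j+1}(A))/(1+σ_1(A)) ≤ σ_j(C(A)) ≤ (1+σ_j(A))/(1−σ_1(A)). -/
open Matrix
open scoped ComplexOrder

namespace SV
variable {n : ℕ}

noncomputable abbrev T (Z : Matrix (Fin n) (Fin n) ℂ) :
    EuclideanSpace ℂ (Fin n) →ₗ[ℂ] EuclideanSpace ℂ (Fin n) := Matrix.toEuclideanLin Z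

lemma hermB (Z : Matrix (Fin n) (Fin n) ℂ) : (Zᴴ * Z).IsHermitian :=
  (Matrix.posSemidef_conjTranspose_mul_self Z).isHermitian

noncomputable def lam (Z : Matrix (Fin n) (Fin n) ℂ) (j : Fin n) : ℝ := eigDesc (hermB Z) j

lemma singVal_eq (Z : Matrix (Fin n) (Fin n) ℂ) (j : Fin n) :
    singVal Z j = Real.sqrt (lam Z j) := rfl

lemma lam_nonneg (Z : Matrix (Fin n) (Fin n) ℂ) (j : Fin n) : 0 ≤ lam Z j :=
  (Matrix.posSemidef_conjTranspose_mul_self Z).eigenvalues_nonneg _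

lemma singVal_nonneg (Z : Matrix (Fin n) (Fin n) ℂ) (j : Fin n) : 0 ≤ singVal Z j :=
  Real.sqrt_nonneg _

lemma singVal_sq (Z : Matrix (Fin n) (Fin n) ℂ) (j : Fin n) :
    singVal Z j ^ 2 = lam Z j := Real.sq_sqrt (lam_nonneg Z j)

lemma lam_antitone (Z : Matrix (Fin n) (Fin n) ℂ) : Antitone (lam Z) := by
  intro i j hij
  exact Tuple.monotone_sort (hermB Z).eigenvalues (Fin.rev_le_rev.mpr hij)

noncomputable def ubasis (Z : Matrix (Fin n) (Fin n) ℂ) :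
    OrthonormalBasis (Fin n) ℂ (EuclideanSpace ℂ (Fin n)) :=
  (hermB Z).eigenvectorBasis.reindex
    ((Fin.revPerm.trans (Tuple.sort (hermB Z).eigenvalues : Equiv.Perm (Fin n))).symm)

lemma ubasis_apply (Z : Matrix (Fin n) (Fin n) ℂ) (j : Fin n) :
    ubasis Z j = (hermB Z).eigenvectorBasis (Tuple.sort (hermB Z).eigenvalues j.rev) := by
  simp [ubasis]

lemma mulVec_ubasis (Z : Matrix (Fin n) (Fin n) ℂ) (j : Fin n) :
    T (Zᴴ * Z) (ubasis Z j) = (lam Z j : ℂ) • ubasis Z j := by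
  have h := (hermB Z).mulVec_eigenvectorBasis (Tuple.sort (hermB Z).eigenvalues j.rev)
  ext i
  rw [ubasis_apply]
  have : T (Zᴴ * Z) ((hermB Z).eigenvectorBasis (Tuple.sort (hermB Z).eigenvalues j.rev)) i
      = ((Zᴴ * Z) *ᵥ ⇑((hermB Z).eigenvectorBasis (Tuple.sort (hermB Z).eigenvalues j.rev))) i := rfl
  rw [this, h]
  simp [lam, eigDesc, Complex.real_smul]

lemma T_mul (X Y : Matrix (Fin n) (Fin n) ℂ) (x : EuclideanSpace ℂ (Fin n)) :
    T (X * Y) x = T X (T Y x) := by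
  simp [Matrix.toEuclideanLin_apply, Matrix.mulVec_mulVec]

lemma repr_T_herm (Z : Matrix (Fin n) (Fin n) ℂ) (x : EuclideanSpace ℂ (Fin n)) (j : Fin n) :
    (ubasis Z).repr (T (Zᴴ * Z) x) j = (lam Z j : ℂ) * (ubasis Z).repr x j := by
  rw [OrthonormalBasis.repr_apply_apply, OrthonormalBasis.repr_apply_apply]
  have hadj : T (Zᴴ * Z) = LinearMap.adjoint (T (Zᴴ * Z)) := by
    rw [← Matrix.toEuclideanLin_conjTranspose_eq_adjoint, (hermB Z).eq]
  calc inner ℂ (ubasis Z j) (T (Zᴴ * Z) x)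
      = inner ℂ (LinearMap.adjoint (T (Zᴴ * Z)) (ubasis Z j)) x := by
        rw [LinearMap.adjoint_inner_left]
    _ = inner ℂ (T (Zᴴ * Z) (ubasis Z j)) x := by rw [← hadj]
    _ = (lam Z j : ℂ) * inner ℂ (ubasis Z j) x := by
        rw [mulVec_ubasis, inner_smul_left]
        simp

lemma normSq_T (Z : Matrix (Fin n) (Fin n) ℂ) (x : EuclideanSpace ℂ (Fin n)) :
    ‖T Z x‖ ^ 2 = ∑ j, lam Z j * ‖(ubasis Z).repr x j‖ ^ 2 := by
  have h1 : (‖T Z x‖ ^ 2 : ℂ) = inner ℂ (T Z x) (T Z x) := by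
    rw [inner_self_eq_norm_sq_to_K]
    norm_cast
  have h2 : (inner ℂ (T Z x) (T Z x) : ℂ) = inner ℂ x (T (Zᴴ * Z) x) := by
    rw [T_mul]
    rw [show T Zᴴ = LinearMap.adjoint (T Z) from Matrix.toEuclideanLin_conjTranspose_eq_adjoint Z,
      LinearMap.adjoint_inner_right]
  have h3 : (inner ℂ x (T (Zᴴ * Z) x) : ℂ)
      = inner ℂ ((ubasis Z).repr x) ((ubasis Z).repr (T (Zᴴ * Z) x)) := by
    rw [LinearIsometryEquiv.inner_map_map]
  have h4 : (inner ℂ ((ubasis Z).repr x) ((ubasis Z).repr (T (Zᴴ * Z) x)) : ℂ)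
      = ((∑ j, lam Z j * ‖(ubasis Z).repr x j‖ ^ 2 : ℝ) : ℂ) := by
    push_cast
    rw [PiLp.inner_apply]
    refine Finset.sum_congr rfl fun j _ => ?_
    rw [repr_T_herm]
    simp only [RCLike.inner_apply]
    rw [mul_assoc, RCLike.mul_conj]
    rfl
  have h5 := h1.trans (h2.trans (h3.trans h4))
  exact_mod_cast h5

lemma parseval (b : OrthonormalBasis (Fin n) ℂ (EuclideanSpace ℂ (Fin n)))
    (x : EuclideanSpace ℂ (Fin n)) : ∑ j, ‖b.repr x j‖ ^ 2 = ‖x‖ ^ 2 := by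
  have h : ‖b.repr x‖ = ‖x‖ := b.repr.norm_map x
  rw [← h, EuclideanSpace.norm_eq, Real.sq_sqrt]
  positivity

/-- Coefficients vanish off the support set. -/
lemma repr_eq_zero_of_mem_span (b : OrthonormalBasis (Fin n) ℂ (EuclideanSpace ℂ (Fin n)))
    (S : Set (Fin n)) {x : EuclideanSpace ℂ (Fin n)}
    (hx : x ∈ Submodule.span ℂ (Set.range (fun i : S => b i))) {j : Fin n} (hj : j ∉ S) :
    b.repr x j = 0 := by
  induction hx using Submodule.span_induction with
  | mem y hy =>
      obtain ⟨i, rfl⟩ := hy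
      rw [OrthonormalBasis.repr_apply_apply]
      exact b.orthonormal.2 (fun h => hj (h ▸ i.2))
  | zero => simp
  | add y z _ _ hy hz => simp [map_add, hy, hz]
  | smul c y _ hy => simp [_root_.map_smul, hy]

lemma finrank_span_set (b : OrthonormalBasis (Fin n) ℂ (EuclideanSpace ℂ (Fin n)))
    (S : Set (Fin n)) [Fintype S] :
    Module.finrank ℂ (Submodule.span ℂ (Set.range (fun i : S => b i))) = Fintype.card S := by
  rw [finrank_span_eq_card]
  exact b.orthonormal.linearIndependent.comp _ Subtype.val_injective

noncomputable def spanGe (Z : Matrix (Fin n) (Fin n) ℂ) (m : Fin n) :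
    Submodule ℂ (EuclideanSpace ℂ (Fin n)) :=
  Submodule.span ℂ (Set.range (fun i : {i : Fin n // m ≤ i} => ubasis Z i))

lemma finrank_spanGe (Z : Matrix (Fin n) (Fin n) ℂ) (m : Fin n) :
    Module.finrank ℂ (spanGe Z m) = n - m := by
  have h := finrank_span_set (ubasis Z) {i | m ≤ i}
  have hc : Fintype.card {i : Fin n | m ≤ i} = n - m := by
    rw [Fintype.card_subtype, ← Fin.card_Ici m]
    congr 1
    ext i
    simp
  exact h.trans hc

lemma bound_on_spanGe (Z : Matrix (Fin n) (Fin n) ℂ) (m : Fin n)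
    {x : EuclideanSpace ℂ (Fin n)} (hx : x ∈ spanGe Z m) :
    ‖T Z x‖ ≤ singVal Z m * ‖x‖ := by
  have hsq : ‖T Z x‖ ^ 2 ≤ lam Z m * ‖x‖ ^ 2 := by
    rw [normSq_T, ← parseval (ubasis Z) x, Finset.mul_sum]
    refine Finset.sum_le_sum fun j _ => ?_
    by_cases hj : m ≤ j
    · exact mul_le_mul_of_nonneg_right (lam_antitone Z hj) (by positivity)
    · rw [repr_eq_zero_of_mem_span (ubasis Z) _ hx hj]
      simp
  have h1 : ‖T Z x‖ = Real.sqrt (‖T Z x‖ ^ 2) := (Real.sqrt_sq (norm_nonneg _)).symm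
  rw [h1, singVal_eq]
  calc Real.sqrt (‖T Z x‖ ^ 2) ≤ Real.sqrt (lam Z m * ‖x‖ ^ 2) := Real.sqrt_le_sqrt hsq
    _ = Real.sqrt (lam Z m) * ‖x‖ := by
        rw [Real.sqrt_mul (lam_nonneg Z m), Real.sqrt_sq (norm_nonneg _)]

noncomputable def spanLe (Z : Matrix (Fin n) (Fin n) ℂ) (m : Fin n) :
    Submodule ℂ (EuclideanSpace ℂ (Fin n)) :=
  Submodule.span ℂ (Set.range (fun i : {i : Fin n // i ≤ m} => ubasis Z i))

lemma finrank_spanLe (Z : Matrix (Fin n) (Fin n) ℂ) (m : Fin n) :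
    Module.finrank ℂ (spanLe Z m) = m + 1 := by
  have h := finrank_span_set (ubasis Z) {i | i ≤ m}
  have hc : Fintype.card {i : Fin n | i ≤ m} = m + 1 := by
    rw [Fintype.card_subtype, ← Fin.card_Iic m]
    congr 1
    ext i
    simp
  exact h.trans hc

lemma bound_on_spanLe (Z : Matrix (Fin n) (Fin n) ℂ) (m : Fin n)
    {x : EuclideanSpace ℂ (Fin n)} (hx : x ∈ spanLe Z m) :
    singVal Z m * ‖x‖ ≤ ‖T Z x‖ := by
  have hsq : lam Z m * ‖x‖ ^ 2 ≤ ‖T Z x‖ ^ 2 := by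
    rw [normSq_T, ← parseval (ubasis Z) x, Finset.mul_sum]
    refine Finset.sum_le_sum fun j _ => ?_
    by_cases hj : j ≤ m
    · exact mul_le_mul_of_nonneg_right (lam_antitone Z hj) (by positivity)
    · rw [repr_eq_zero_of_mem_span (ubasis Z) _ hx hj]
      simp
  have h1 : ‖T Z x‖ = Real.sqrt (‖T Z x‖ ^ 2) := (Real.sqrt_sq (norm_nonneg _)).symm
  rw [h1, singVal_eq]
  calc Real.sqrt (lam Z m) * ‖x‖ = Real.sqrt (lam Z m * ‖x‖ ^ 2) := by
        rw [Real.sqrt_mul (lam_nonneg Z m), Real.sqrt_sq (norm_nonneg _)]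
    _ ≤ Real.sqrt (‖T Z x‖ ^ 2) := Real.sqrt_le_sqrt hsq

/-- Min-max style upper bound: if `Z` is bounded by `c` on a subspace of dimension
`> n - (m+1)`, then `singVal Z m ≤ c`. -/
lemma singVal_le_of_subspace (Z : Matrix (Fin n) (Fin n) ℂ) (m : Fin n)
    (V : Submodule ℂ (EuclideanSpace ℂ (Fin n))) (hdim : n < Module.finrank ℂ V + (m + 1))
    {c : ℝ} (hc : 0 ≤ c) (hV : ∀ x ∈ V, ‖T Z x‖ ≤ c * ‖x‖) : singVal Z m ≤ c := by
  have hinf : 0 < Module.finrank ℂ (V ⊓ spanLe Z m : Submodule ℂ (EuclideanSpace ℂ (Fin n))) := by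
    have h1 := Submodule.finrank_sup_add_finrank_inf_eq V (spanLe Z m)
    have h2 : Module.finrank ℂ (V ⊔ spanLe Z m : Submodule ℂ (EuclideanSpace ℂ (Fin n))) ≤ n := by
      simpa [finrank_euclideanSpace] using Submodule.finrank_le (V ⊔ spanLe Z m)
    have h3 := finrank_spanLe Z m
    omega
  have hrank : 0 < Module.rank ℂ (V ⊓ spanLe Z m : Submodule ℂ (EuclideanSpace ℂ (Fin n))) := by
    rw [← Submodule.finrank_eq_rank]
    exact_mod_cast hinf
  obtain ⟨x, hxmem, hxne⟩ := exists_mem_ne_zero_of_rank_pos hrank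
  have hx0 : x ≠ 0 := hxne
  have hxV : x ∈ V := hxmem.1
  have hxW : x ∈ spanLe Z m := hxmem.2
  have hlow := bound_on_spanLe Z m hxW
  have hup := hV x hxV
  have hnorm : 0 < ‖x‖ := norm_pos_iff.mpr hx0
  nlinarith [le_trans hlow hup]

lemma T_add (X Y : Matrix (Fin n) (Fin n) ℂ) (x : EuclideanSpace ℂ (Fin n)) :
    T (X + Y) x = T X x + T Y x := by
  ext i
  exact congrFun (Matrix.add_mulVec X Y x) i

/-- `singVal (X * Y) j ≤ singVal X j * b` when `Y` is bounded by `b` and bijective. -/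
lemma singVal_mul_le (X Y : Matrix (Fin n) (Fin n) ℂ) (j : Fin n) {b : ℝ} (hb : 0 ≤ b)
    (hY : ∀ x, ‖T Y x‖ ≤ b * ‖x‖) (hYbij : Function.Bijective (T Y)) :
    singVal (X * Y) j ≤ singVal X j * b := by
  set e := LinearEquiv.ofBijective (T Y) hYbij with he
  have hcoe : (e : EuclideanSpace ℂ (Fin n) →ₗ[ℂ] EuclideanSpace ℂ (Fin n)) = T Y := rfl
  refine singVal_le_of_subspace (X * Y) j (Submodule.comap (T Y) (spanGe X j)) ?_
    (mul_nonneg (singVal_nonneg X j) hb) ?_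
  · have h1 := Submodule.comap_equiv_eq_map_symm e (spanGe X j)
    rw [hcoe] at h1
    rw [h1, LinearEquiv.finrank_map_eq, finrank_spanGe]
    have := j.isLt
    omega
  · intro x hx
    have hmem : T Y x ∈ spanGe X j := hx
    calc ‖T (X * Y) x‖ = ‖T X (T Y x)‖ := by rw [T_mul]
      _ ≤ singVal X j * ‖T Y x‖ := bound_on_spanGe X j hmem
      _ ≤ singVal X j * (b * ‖x‖) :=
          mul_le_mul_of_nonneg_left (hY x) (singVal_nonneg X j)
      _ = singVal X j * b * ‖x‖ := by ring

/-- Weyl's inequality for singular values. -/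
lemma singVal_add_le (X Y : Matrix (Fin n) (Fin n) ℂ) (i k m : Fin n)
    (hm : (m : ℕ) = i + k) :
    singVal (X + Y) m ≤ singVal X i + singVal Y k := by
  refine singVal_le_of_subspace (X + Y) m (spanGe X i ⊓ spanGe Y k) ?_
    (add_nonneg (singVal_nonneg X i) (singVal_nonneg Y k)) ?_
  · have h1 := Submodule.finrank_sup_add_finrank_inf_eq (spanGe X i) (spanGe Y k)
    have h2 : Module.finrank ℂ (spanGe X i ⊔ spanGe Y k :
        Submodule ℂ (EuclideanSpace ℂ (Fin n))) ≤ n := by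
      simpa [finrank_euclideanSpace] using Submodule.finrank_le (spanGe X i ⊔ spanGe Y k)
    rw [finrank_spanGe, finrank_spanGe] at h1
    have hi := i.isLt
    have hk := k.isLt
    have hmn := m.isLt
    omega
  · rintro x ⟨hx1, hx2⟩
    calc ‖T (X + Y) x‖ = ‖T X x + T Y x‖ := by rw [T_add]
      _ ≤ ‖T X x‖ + ‖T Y x‖ := norm_add_le _ _
      _ ≤ singVal X i * ‖x‖ + singVal Y k * ‖x‖ :=
          add_le_add (bound_on_spanGe X i hx1) (bound_on_spanGe Y k hx2)
      _ = (singVal X i + singVal Y k) * ‖x‖ := by ring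

lemma singVal_congr {X Y : Matrix (Fin n) (Fin n) ℂ} (h : Xᴴ * X = Yᴴ * Y) :
    singVal X = singVal Y := by
  have key : ∀ (M N : Matrix (Fin n) (Fin n) ℂ) (hM : M.IsHermitian) (hN : N.IsHermitian),
      M = N → eigDesc hM = eigDesc hN := by
    rintro M N hM hN rfl
    rfl
  funext j
  exact congrArg Real.sqrt (congrFun (key _ _ _ _ h) j)

lemma spanGe_zero (Z : Matrix (Fin n) (Fin n) ℂ) (hn : 0 < n) :
    spanGe Z ⟨0, hn⟩ = ⊤ := by
  apply Submodule.eq_top_of_finrank_eq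
  rw [finrank_spanGe, finrank_euclideanSpace]
  simp

lemma global_bound (Z : Matrix (Fin n) (Fin n) ℂ) (hn : 0 < n)
    (x : EuclideanSpace ℂ (Fin n)) : ‖T Z x‖ ≤ singVal Z ⟨0, hn⟩ * ‖x‖ :=
  bound_on_spanGe Z ⟨0, hn⟩ (by rw [spanGe_zero Z hn]; trivial)

lemma singVal_of_unitary {Z : Matrix (Fin n) (Fin n) ℂ} (h : Zᴴ * Z = 1) (j : Fin n) :
    singVal Z j = 1 := by
  have h1 := mulVec_ubasis Z j
  rw [h] at h1
  have h2 : T (1 : Matrix (Fin n) (Fin n) ℂ) (ubasis Z j) = ubasis Z j := by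
    ext i
    exact congrFun (Matrix.one_mulVec _) i
  rw [h2] at h1
  have hne : ubasis Z j ≠ 0 := (ubasis Z).orthonormal.ne_zero j
  have h3 : (lam Z j : ℂ) = 1 := by
    by_contra hc
    have : ((lam Z j : ℂ) - 1) • ubasis Z j = 0 := by
      rw [sub_smul, one_smul, ← h1, sub_self]
    rcases smul_eq_zero.mp this with h4 | h4
    · exact hc (by linear_combination h4)
    · exact hne h4
  have h4 : lam Z j = 1 := by exact_mod_cast h3
  rw [singVal_eq, h4, Real.sqrt_one]

lemma T_smul_one (c : ℂ) (x : EuclideanSpace ℂ (Fin n)) :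
    T (c • (1 : Matrix (Fin n) (Fin n) ℂ)) x = c • x := by
  ext i
  have : ((c • (1 : Matrix (Fin n) (Fin n) ℂ)) *ᵥ x) i = (c • ((1 : Matrix (Fin n) (Fin n) ℂ) *ᵥ x)) i := by
    rw [Matrix.smul_mulVec]
  rw [show T (c • (1 : Matrix (Fin n) (Fin n) ℂ)) x i = ((c • (1 : Matrix (Fin n) (Fin n) ℂ)) *ᵥ x) i from rfl, this, Matrix.one_mulVec]
  rfl

section Main

variable {A : Matrix (Fin n) (Fin n) ℂ} (hn : 0 < n) (hA1 : singVal A ⟨0, hn⟩ < 1)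

private lemma s0_nonneg : (0:ℝ) ≤ singVal A ⟨0, hn⟩ := singVal_nonneg A _

lemma Ai_lower (x : EuclideanSpace ℂ (Fin n)) :
    (1 - singVal A ⟨0, hn⟩) * ‖x‖ ≤ ‖T (A + Complex.I • 1) x‖ := by
  have h1 : T (A + Complex.I • 1) x = T A x + Complex.I • x := by
    rw [T_add, T_smul_one]
  have h2 : ‖Complex.I • x‖ = ‖x‖ := by
    rw [norm_smul, Complex.norm_I, one_mul]
  have h3 : ‖x‖ ≤ ‖T (A + Complex.I • 1) x‖ + ‖T A x‖ := by
    calc ‖x‖ = ‖Complex.I • x‖ := h2.symm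
      _ = ‖(T A x + Complex.I • x) - T A x‖ := by congr 1; abel
      _ ≤ ‖T A x + Complex.I • x‖ + ‖T A x‖ := norm_sub_le _ _
      _ = ‖T (A + Complex.I • 1) x‖ + ‖T A x‖ := by rw [h1]
  have h4 := global_bound A hn x
  nlinarith [norm_nonneg x]

lemma Ai_upper (x : EuclideanSpace ℂ (Fin n)) :
    ‖T (A + Complex.I • 1) x‖ ≤ (1 + singVal A ⟨0, hn⟩) * ‖x‖ := by
  have h1 : T (A + Complex.I • 1) x = T A x + Complex.I • x := by
    rw [T_add, T_smul_one]
  have h2 : ‖Complex.I • x‖ = ‖x‖ := by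
    rw [norm_smul, Complex.norm_I, one_mul]
  calc ‖T (A + Complex.I • 1) x‖ ≤ ‖T A x‖ + ‖Complex.I • x‖ := by
        rw [h1]; exact norm_add_le _ _
    _ ≤ singVal A ⟨0, hn⟩ * ‖x‖ + ‖x‖ := by
        have := global_bound A hn x; rw [h2]; linarith
    _ = (1 + singVal A ⟨0, hn⟩) * ‖x‖ := by ring

include hA1 in
lemma Ai_inj : Function.Injective (T (A + Complex.I • 1)) := by
  rw [← LinearMap.ker_eq_bot, LinearMap.ker_eq_bot']
  intro x hx
  by_contra hne
  have h1 := Ai_lower hn (A := A) x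
  rw [hx, norm_zero] at h1
  have h2 : 0 < ‖x‖ := norm_pos_iff.mpr hne
  nlinarith

include hA1 in
lemma Ai_bij : Function.Bijective (T (A + Complex.I • 1)) := by
  have h := Ai_inj hn hA1
  exact ⟨h, (LinearMap.injective_iff_surjective).mp h⟩

include hA1 in
lemma Ai_det : IsUnit (A + Complex.I • 1).det := by
  rw [isUnit_iff_ne_zero]
  intro hdet
  obtain ⟨v, hv0, hv⟩ := (Matrix.exists_mulVec_eq_zero_iff).mpr hdet
  have : T (A + Complex.I • 1) ((WithLp.equiv 2 (Fin n → ℂ)).symm v) = 0 := by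
    ext i
    exact congrFun hv i
  have h0 : ((WithLp.equiv 2 (Fin n → ℂ)).symm v) = 0 := Ai_inj hn hA1 (by simpa using this)
  exact hv0 (by simpa using congrArg (WithLp.equiv 2 (Fin n → ℂ)) h0)

include hA1 in
lemma Ai_inv_mul : (A + Complex.I • 1)⁻¹ * (A + Complex.I • 1) = 1 :=
  Matrix.nonsing_inv_mul _ (Ai_det hn hA1)

include hA1 in
lemma Ai_mul_inv : (A + Complex.I • 1) * (A + Complex.I • 1)⁻¹ = 1 :=
  Matrix.mul_nonsing_inv _ (Ai_det hn hA1)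

include hA1 in
lemma Ai_inv_bound (y : EuclideanSpace ℂ (Fin n)) :
    ‖T (A + Complex.I • 1)⁻¹ y‖ ≤ (1 - singVal A ⟨0, hn⟩)⁻¹ * ‖y‖ := by
  have hpos : (0:ℝ) < 1 - singVal A ⟨0, hn⟩ := by linarith
  have h1 : T (A + Complex.I • 1) (T (A + Complex.I • 1)⁻¹ y) = y := by
    rw [← T_mul, Ai_mul_inv hn hA1]
    ext i
    exact congrFun (Matrix.one_mulVec _) i
  have h2 := Ai_lower hn (A := A) (T (A + Complex.I • 1)⁻¹ y)
  rw [h1] at h2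
  rw [inv_mul_eq_div, le_div_iff₀ hpos]
  linarith

include hA1 in
lemma Ai_inv_bij : Function.Bijective (T (A + Complex.I • 1)⁻¹) := by
  have hinj : Function.Injective (T (A + Complex.I • 1)⁻¹) := by
    rw [← LinearMap.ker_eq_bot, LinearMap.ker_eq_bot']
    intro x hx
    have : T ((A + Complex.I • 1) * (A + Complex.I • 1)⁻¹) x = 0 := by
      rw [T_mul, hx, map_zero]
    rw [Ai_mul_inv hn hA1] at this
    have h2 : T (1 : Matrix (Fin n) (Fin n) ℂ) x = x := by
      ext i
      exact congrFun (Matrix.one_mulVec _) i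
    rw [h2] at this
    exact this
  exact ⟨hinj, (LinearMap.injective_iff_surjective).mp hinj⟩

end Main

end SV

theorem stmt17 {n : ℕ} (A : Matrix (Fin n) (Fin n) ℂ) (hA : ∀ j, singVal A j < 1) (j : Fin n) :
    (1 - singVal A j.rev) / (1 + singVal A ⟨0, j.pos⟩) ≤
        singVal ((A - Complex.I • 1) * (A + Complex.I • 1)⁻¹) j ∧
      singVal ((A - Complex.I • 1) * (A + Complex.I • 1)⁻¹) j ≤
        (1 + singVal A j) / (1 - singVal A ⟨0, j.pos⟩) := by
  have hn : 0 < n := j.pos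
  have hA1 : singVal A ⟨0, hn⟩ < 1 := hA _
  have hs0 : (0:ℝ) ≤ singVal A ⟨0, hn⟩ := SV.singVal_nonneg A _
  set s0 := singVal A ⟨0, hn⟩ with hs0def
  set Ai := A + Complex.I • (1 : Matrix (Fin n) (Fin n) ℂ) with hAidef
  set N := A - Complex.I • (1 : Matrix (Fin n) (Fin n) ℂ) with hNdef
  have hNsplit : N = A + (-(Complex.I • (1 : Matrix (Fin n) (Fin n) ℂ))) := by
    rw [hNdef, sub_eq_add_neg]
  have hone : ∀ k : Fin n, singVal (-(Complex.I • (1 : Matrix (Fin n) (Fin n) ℂ))) k = 1 := by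
    intro k
    apply SV.singVal_of_unitary
    rw [Matrix.conjTranspose_neg, Matrix.conjTranspose_smul, Matrix.conjTranspose_one,
      neg_mul_neg, Matrix.smul_mul, Matrix.mul_smul, smul_smul, Matrix.one_mul]
    simp [Complex.conj_I]
  have hnegA : singVal (-A) j.rev = singVal A j.rev := by
    have h := SV.singVal_congr (X := -A) (Y := A) (by simp)
    exact congrFun h j.rev
  -- upper bound
  have hb : (0:ℝ) ≤ (1 - s0)⁻¹ := inv_nonneg.mpr (by linarith)
  have hup1 : singVal (N * Ai⁻¹) j ≤ singVal N j * (1 - s0)⁻¹ :=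
    SV.singVal_mul_le N Ai⁻¹ j hb (SV.Ai_inv_bound hn hA1) (SV.Ai_inv_bij hn hA1)
  have hup2 : singVal N j ≤ singVal A j + 1 := by
    have h := SV.singVal_add_le A (-(Complex.I • (1 : Matrix (Fin n) (Fin n) ℂ))) j ⟨0, hn⟩ j
      (by simp)
    rw [← hNsplit, hone] at h
    exact h
  have upper : singVal (N * Ai⁻¹) j ≤ (1 + singVal A j) / (1 - s0) := by
    rw [div_eq_mul_inv]
    calc singVal (N * Ai⁻¹) j ≤ singVal N j * (1 - s0)⁻¹ := hup1
      _ ≤ (singVal A j + 1) * (1 - s0)⁻¹ := mul_le_mul_of_nonneg_right hup2 hb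
      _ = (1 + singVal A j) * (1 - s0)⁻¹ := by ring
  -- lower bound
  have hCAi : (N * Ai⁻¹) * Ai = N := by
    rw [mul_assoc, SV.Ai_inv_mul hn hA1, mul_one]
  have hlow1 : singVal N j ≤ singVal (N * Ai⁻¹) j * (1 + s0) := by
    have h := SV.singVal_mul_le (N * Ai⁻¹) Ai j (by linarith) (SV.Ai_upper hn) (SV.Ai_bij hn hA1)
    rw [hCAi] at h
    exact h
  have hm : ((⟨n - 1, by omega⟩ : Fin n) : ℕ) = j + j.rev := by
    have := j.isLt
    simp only [Fin.val_rev]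
    omega
  have hlow2 := SV.singVal_add_le N (-A) j j.rev ⟨n - 1, by omega⟩ hm
  have hsum : N + (-A) = -(Complex.I • (1 : Matrix (Fin n) (Fin n) ℂ)) := by
    rw [hNsplit]; abel
  rw [hsum, hone, hnegA] at hlow2
  have lower : (1 - singVal A j.rev) / (1 + s0) ≤ singVal (N * Ai⁻¹) j := by
    rw [div_le_iff₀ (by linarith)]
    linarith
  exact ⟨lower, upper⟩
end
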